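/- arXiv:1211.2456 — 7 statements merged into one kernel-verified Lean document; each statement's English description precedes it below -/
import Mathlib

section
/- Let A and B be bases of a matroid M on a finite ground set. Then for every partition B = B₁ ⊔ B₂ ⊔ ⋯ ⊔ B_k of B into k pairwise disjoint (possibly empty) parts, there exists a partition A = A₁ ⊔ A₂ ⊔ ⋯ ⊔ A_k of A into k pairwise disjoint parts such that (A \ A_i) ∪ B_i is a basis of M for every i ∈ {1, …, k}. -/
open Set

namespace Matroid

variable {α : Type*} {M : Matroid α} {I X Y : Set α} {e : α}

/-- Rank of a set, as a natural number. -/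
noncomputable def mrk (M : Matroid α) (X : Set α) : ℕ := (M.exists_isBasis' X).choose.ncard

lemma IsBasis'.ncard_eq_mrk (hI : M.IsBasis' I X) : I.ncard = M.mrk X := by
  have h := (M.exists_isBasis' X).choose_spec
  have := hI.encard_eq_encard h
  rw [Set.ncard_def, this, ← Set.ncard_def, mrk]

lemma exists_mrk_basis' (M : Matroid α) (X : Set α) : ∃ I, M.IsBasis' I X ∧ I.ncard = M.mrk X :=
  ⟨_, (M.exists_isBasis' X).choose_spec, rfl⟩

lemma Indep.ncard_le_mrk (hE : M.E.Finite) (hI : M.Indep I) (hIX : I ⊆ X) :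
    I.ncard ≤ M.mrk X := by
  obtain ⟨J, hJ, hIJ⟩ := hI.subset_isBasis'_of_subset hIX
  rw [← hJ.ncard_eq_mrk]
  exact Set.ncard_le_ncard hIJ (hE.subset hJ.indep.subset_ground)

lemma Indep.mrk_eq (hI : M.Indep I) : M.mrk I = I.ncard :=
  (hI.isBasis_self.isBasis'.ncard_eq_mrk).symm

lemma mrk_mono (hE : M.E.Finite) (hXY : X ⊆ Y) : M.mrk X ≤ M.mrk Y := by
  obtain ⟨I, hI, hc⟩ := M.exists_mrk_basis' X
  rw [← hc]
  exact hI.indep.ncard_le_mrk hE (hI.subset.trans hXY)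

lemma mrk_union_eq_of_subset_closure (hY : Y ⊆ M.closure X) : M.mrk (X ∪ Y) = M.mrk X := by
  obtain ⟨I, hI, hc⟩ := M.exists_mrk_basis' X
  have hclI : M.closure I = M.closure X := hI.closure_eq_closure
  have hb : M.IsBasis' I (X ∪ Y) := by
    rw [isBasis'_iff_isBasis_inter_ground]
    refine hI.indep.isBasis_of_subset_of_subset_closure ?_ ?_
    · intro x hx
      exact ⟨Or.inl (hI.subset hx), hI.indep.subset_ground hx⟩
    · rintro x ⟨hx | hx, hxE⟩
      · rw [hclI]
        exact M.inter_ground_subset_closure X ⟨hx, hxE⟩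
      · rw [hclI]; exact hY hx
  rw [← hc, ← hb.ncard_eq_mrk]

lemma mrk_insert_of_not_mem_closure (hE : M.E.Finite) (heE : e ∈ M.E) (he : e ∉ M.closure X) :
    M.mrk (insert e X) = M.mrk X + 1 := by
  obtain ⟨I, hI, hc⟩ := M.exists_mrk_basis' X
  have hclI : M.closure I = M.closure X := hI.closure_eq_closure
  have heI : M.Indep (insert e I) := by
    rw [hI.indep.insert_indep_iff]
    exact Or.inl ⟨heE, by rwa [hclI]⟩
  have hb : M.IsBasis' (insert e I) (insert e X) := by
    rw [isBasis'_iff_isBasis_inter_ground]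
    refine heI.isBasis_of_subset_of_subset_closure ?_ ?_
    · exact insert_subset ⟨mem_insert _ _, heE⟩
        ((subset_inter hI.subset hI.indep.subset_ground).trans
          (inter_subset_inter_left _ (subset_insert _ _)))
    · have h1 : M.closure X ⊆ M.closure (insert e I) := by
        rw [← hclI]; exact M.closure_subset_closure (subset_insert _ _)
      rintro x ⟨hx | hx, hxE⟩
      · subst hx
        exact M.subset_closure _ heI.subset_ground (mem_insert _ _)
      · exact h1 (M.inter_ground_subset_closure X ⟨hx, hxE⟩)
  have heI' : e ∉ I := fun h ↦ he (by
    rw [← hclI]; exact M.subset_closure _ hI.indep.subset_ground h)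
  rw [← hc, ← hb.ncard_eq_mrk,
    ncard_insert_of_notMem heI' (hE.subset hI.indep.subset_ground)]

lemma mrk_submod (hE : M.E.Finite) (X Y : Set α) :
    M.mrk (X ∪ Y) + M.mrk (X ∩ Y) ≤ M.mrk X + M.mrk Y := by
  obtain ⟨I, hI, hcI⟩ := M.exists_mrk_basis' (X ∩ Y)
  obtain ⟨J, hJ, hIJ⟩ := hI.indep.subset_isBasis'_of_subset
    (hI.subset.trans (inter_subset_left.trans subset_union_left))
  have hJfin : J.Finite := hE.subset hJ.indep.subset_ground
  have h1 : (J ∩ X).ncard ≤ M.mrk X :=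
    (hJ.indep.subset inter_subset_left).ncard_le_mrk hE inter_subset_right
  have h2 : (J ∩ Y).ncard ≤ M.mrk Y :=
    (hJ.indep.subset inter_subset_left).ncard_le_mrk hE inter_subset_right
  have hsplit : (J ∩ X).ncard + (J ∩ Y).ncard
      = ((J ∩ X) ∪ (J ∩ Y)).ncard + ((J ∩ X) ∩ (J ∩ Y)).ncard :=
    (ncard_union_add_ncard_inter _ _ (hJfin.subset inter_subset_left)
      (hJfin.subset inter_subset_left)).symm
  have hJXY : (J ∩ X) ∪ (J ∩ Y) = J := by
    rw [← inter_union_distrib_left]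
    exact inter_eq_left.mpr hJ.subset
  have hIJXY : I ⊆ (J ∩ X) ∩ (J ∩ Y) := by
    intro x hx
    have hxXY : x ∈ X ∩ Y := hI.subset hx
    exact ⟨⟨hIJ hx, hxXY.1⟩, hIJ hx, hxXY.2⟩
  have hIc : M.mrk (X ∩ Y) ≤ ((J ∩ X) ∩ (J ∩ Y)).ncard := by
    rw [← hcI]; exact ncard_le_ncard hIJXY (hJfin.subset (inter_subset_left.trans inter_subset_left))
  have hJc : J.ncard = M.mrk (X ∪ Y) := hJ.ncard_eq_mrk
  rw [hJXY] at hsplit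
  omega

lemma IsBase.ncard_eq_mrk_ground (hB : M.IsBase X) : X.ncard = M.mrk M.E :=
  hB.isBasis_ground.isBasis'.ncard_eq_mrk

lemma Indep.base_of_mrk_le_ncard (hE : M.E.Finite) (hI : M.Indep I)
    (hc : M.mrk M.E ≤ I.ncard) : M.IsBase I := by
  obtain ⟨B, hB, hIB⟩ := hI.exists_isBase_superset
  rwa [eq_of_subset_of_ncard_le hIB (by rw [hB.ncard_eq_mrk_ground]; exact hc)
    (hE.subset hB.subset_ground)]

set_option maxHeartbeats 1000000 in
/-- Key partition lemma: if the rank condition holds, `A` can be partitioned into a set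
independent over `C₁` and a set independent over `C₂`. -/
lemma part2 (hE : M.E.Finite) : ∀ (n : ℕ) (A C₁ C₂ : Set α), A.ncard = n → A ⊆ M.E →
    M.Indep C₁ → M.Indep C₂ →
    (∀ S, S ⊆ A → S.ncard + M.mrk C₁ + M.mrk C₂ ≤ M.mrk (S ∪ C₁) + M.mrk (S ∪ C₂)) →
    ∃ A₁ A₂, A₁ ∪ A₂ = A ∧ Disjoint A₁ A₂ ∧ M.Indep (A₁ ∪ C₁) ∧ M.Indep (A₂ ∪ C₂) := by
  intro n
  induction n with
  | zero =>
    intro A C₁ C₂ hcard hAE hC₁ hC₂ _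
    have hAfin : A.Finite := hE.subset hAE
    have : A = ∅ := (ncard_eq_zero hAfin).mp hcard
    exact ⟨∅, ∅, by simp [this], disjoint_empty _, by simpa using hC₁, by simpa using hC₂⟩
  | succ n ih =>
    intro A C₁ C₂ hcard hAE hC₁ hC₂ hcond
    have hAfin : A.Finite := hE.subset hAE
    obtain ⟨e, he⟩ : A.Nonempty := by
      rw [← ncard_pos hAfin]; omega
    have heE : e ∈ M.E := hAE he
    set A' := A \ {e} with hA'def
    have hA'A : A' ⊆ A := diff_subset
    have hA'card : A'.ncard = n := by
      rw [hA'def, ncard_diff_singleton_of_mem he, hcard]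
      omega
    have heA' : e ∉ A' := fun h ↦ h.2 rfl
    by_cases h1 : e ∉ M.closure C₁ ∧ ∀ S, S ⊆ A' →
        S.ncard + M.mrk (insert e C₁) + M.mrk C₂
          ≤ M.mrk (S ∪ insert e C₁) + M.mrk (S ∪ C₂)
    · obtain ⟨hcl1, hcond1⟩ := h1
      have heC₁ : e ∉ C₁ := fun h ↦ hcl1 (M.subset_closure C₁ hC₁.subset_ground h)
      have hC₁' : M.Indep (insert e C₁) := by
        rw [hC₁.insert_indep_iff_of_notMem heC₁]; exact ⟨heE, hcl1⟩
      obtain ⟨A₁, A₂, hun, hdj, hi1, hi2⟩ := ih A' (insert e C₁) C₂ hA'card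
        (hA'A.trans hAE) hC₁' hC₂ hcond1
      refine ⟨insert e A₁, A₂, ?_, ?_, ?_, hi2⟩
      · rw [insert_union, hun, hA'def, insert_diff_singleton, insert_eq_self.mpr he]
      · refine disjoint_left.mpr ?_
        rintro x (rfl | hx) hx2
        · exact heA' (hun ▸ Or.inr hx2)
        · exact (disjoint_left.mp hdj) hx hx2
      · rwa [insert_union, ← union_insert]
    · by_cases h2 : e ∉ M.closure C₂ ∧ ∀ S, S ⊆ A' →
          S.ncard + M.mrk (insert e C₂) + M.mrk C₁
            ≤ M.mrk (S ∪ insert e C₂) + M.mrk (S ∪ C₁)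
      · obtain ⟨hcl2, hcond2⟩ := h2
        have heC₂ : e ∉ C₂ := fun h ↦ hcl2 (M.subset_closure C₂ hC₂.subset_ground h)
        have hC₂' : M.Indep (insert e C₂) := by
          rw [hC₂.insert_indep_iff_of_notMem heC₂]; exact ⟨heE, hcl2⟩
        obtain ⟨A₁, A₂, hun, hdj, hi1, hi2⟩ := ih A' (insert e C₂) C₁ hA'card
          (hA'A.trans hAE) hC₂' hC₁ hcond2
        refine ⟨A₂, insert e A₁, ?_, ?_, hi2, ?_⟩
        · rw [union_comm, insert_union, hun, hA'def, insert_diff_singleton,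
            insert_eq_self.mpr he]
        · refine disjoint_right.mpr ?_
          rintro x (rfl | hx) hx2
          · exact heA' (hun ▸ Or.inr hx2)
          · exact (disjoint_left.mp hdj) hx hx2
        · rwa [insert_union, ← union_insert]
      · exfalso
        push_neg at h1 h2
        by_cases hcl1 : e ∈ M.closure C₁ <;> by_cases hcl2 : e ∈ M.closure C₂
        · have h := hcond {e} (singleton_subset_iff.mpr he)
          rw [ncard_singleton, union_comm _ C₁, union_comm _ C₂,
            mrk_union_eq_of_subset_closure (singleton_subset_iff.mpr hcl1),
            mrk_union_eq_of_subset_closure (singleton_subset_iff.mpr hcl2)] at h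
          omega
        · obtain ⟨S₂, hS₂A, hS₂⟩ := h2 hcl2
          have hS₂fin : S₂.Finite := hAfin.subset (hS₂A.trans hA'A)
          have heS₂ : e ∉ S₂ := fun h ↦ heA' (hS₂A h)
          have hr2 : M.mrk (insert e C₂) = M.mrk C₂ + 1 :=
            mrk_insert_of_not_mem_closure hE heE hcl2
          have h := hcond (insert e S₂) (insert_subset he (hS₂A.trans hA'A))
          have hu1 : insert e S₂ ∪ C₁ = (S₂ ∪ C₁) ∪ {e} := by
            ext x; simp only [mem_insert_iff, mem_union, mem_singleton_iff]; tauto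
          have hu2 : insert e S₂ ∪ C₂ = S₂ ∪ insert e C₂ := by
            rw [insert_union, ← union_insert]
          have hecl : ({e} : Set α) ⊆ M.closure (S₂ ∪ C₁) :=
            singleton_subset_iff.mpr (M.closure_subset_closure subset_union_right hcl1)
          rw [ncard_insert_of_notMem heS₂ hS₂fin, hu1, hu2,
            mrk_union_eq_of_subset_closure hecl] at h
          omega
        · obtain ⟨S₁, hS₁A, hS₁⟩ := h1 hcl1
          have hS₁fin : S₁.Finite := hAfin.subset (hS₁A.trans hA'A)
          have heS₁ : e ∉ S₁ := fun h ↦ heA' (hS₁A h)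
          have hr1 : M.mrk (insert e C₁) = M.mrk C₁ + 1 :=
            mrk_insert_of_not_mem_closure hE heE hcl1
          have h := hcond (insert e S₁) (insert_subset he (hS₁A.trans hA'A))
          have hu1 : insert e S₁ ∪ C₂ = (S₁ ∪ C₂) ∪ {e} := by
            ext x; simp only [mem_insert_iff, mem_union, mem_singleton_iff]; tauto
          have hu2 : insert e S₁ ∪ C₁ = S₁ ∪ insert e C₁ := by
            rw [insert_union, ← union_insert]
          have hecl : ({e} : Set α) ⊆ M.closure (S₁ ∪ C₂) :=
            singleton_subset_iff.mpr (M.closure_subset_closure subset_union_right hcl2)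
          rw [ncard_insert_of_notMem heS₁ hS₁fin, hu1, hu2,
            mrk_union_eq_of_subset_closure hecl] at h
          omega
        · obtain ⟨S₁, hS₁A, hS₁⟩ := h1 hcl1
          obtain ⟨S₂, hS₂A, hS₂⟩ := h2 hcl2
          have hS₁fin : S₁.Finite := hAfin.subset (hS₁A.trans hA'A)
          have hS₂fin : S₂.Finite := hAfin.subset (hS₂A.trans hA'A)
          have heS : e ∉ S₁ ∪ S₂ := fun h ↦
            heA' (h.elim (fun h ↦ hS₁A h) fun h ↦ hS₂A h)
          have hr1 : M.mrk (insert e C₁) = M.mrk C₁ + 1 :=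
            mrk_insert_of_not_mem_closure hE heE hcl1
          have hr2 : M.mrk (insert e C₂) = M.mrk C₂ + 1 :=
            mrk_insert_of_not_mem_closure hE heE hcl2
          have hsub1 := M.mrk_submod hE (S₁ ∪ insert e C₁) (S₂ ∪ C₁)
          have hq1 : (S₁ ∪ insert e C₁) ∪ (S₂ ∪ C₁) = insert e (S₁ ∪ S₂) ∪ C₁ := by
            ext x; simp only [mem_insert_iff, mem_union]; tauto
          have hq1' : (S₁ ∩ S₂) ∪ C₁ ⊆ (S₁ ∪ insert e C₁) ∩ (S₂ ∪ C₁) := by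
            intro x hx
            simp only [mem_union, mem_inter_iff, mem_insert_iff] at hx ⊢; tauto
          have hm1 : M.mrk ((S₁ ∩ S₂) ∪ C₁) ≤ M.mrk ((S₁ ∪ insert e C₁) ∩ (S₂ ∪ C₁)) :=
            mrk_mono hE hq1'
          rw [hq1] at hsub1
          have hsub2 := M.mrk_submod hE (S₂ ∪ insert e C₂) (S₁ ∪ C₂)
          have hq2 : (S₂ ∪ insert e C₂) ∪ (S₁ ∪ C₂) = insert e (S₁ ∪ S₂) ∪ C₂ := by
            ext x; simp only [mem_insert_iff, mem_union]; tauto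
          have hq2' : (S₁ ∩ S₂) ∪ C₂ ⊆ (S₂ ∪ insert e C₂) ∩ (S₁ ∪ C₂) := by
            intro x hx
            simp only [mem_union, mem_inter_iff, mem_insert_iff] at hx ⊢; tauto
          have hm2 : M.mrk ((S₁ ∩ S₂) ∪ C₂) ≤ M.mrk ((S₂ ∪ insert e C₂) ∩ (S₁ ∪ C₂)) :=
            mrk_mono hE hq2'
          rw [hq2] at hsub2
          have hU := hcond (insert e (S₁ ∪ S₂))
            (insert_subset he (union_subset (hS₁A.trans hA'A) (hS₂A.trans hA'A)))
          have hT := hcond (S₁ ∩ S₂) ((inter_subset_left).trans (hS₁A.trans hA'A))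
          have hcU : (insert e (S₁ ∪ S₂)).ncard = (S₁ ∪ S₂).ncard + 1 :=
            ncard_insert_of_notMem heS (hS₁fin.union hS₂fin)
          have hci : (S₁ ∪ S₂).ncard + (S₁ ∩ S₂).ncard = S₁.ncard + S₂.ncard :=
            ncard_union_add_ncard_inter S₁ S₂ hS₁fin hS₂fin
          omega

/-- Greene's symmetric subset exchange theorem, relative to a common independent part `K`. -/
lemma symm_exchange (hE : M.E.Finite) {A B₁ B₂ K : Set α}
    (hbA : M.IsBase (A ∪ K)) (hbB : M.IsBase (B₁ ∪ B₂ ∪ K))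
    (hAB : Disjoint A (B₁ ∪ B₂)) (hKA : Disjoint K A) (hKB : Disjoint K (B₁ ∪ B₂))
    (hB12 : Disjoint B₁ B₂) :
    ∃ A₁ A₂, A₁ ∪ A₂ = A ∧ Disjoint A₁ A₂ ∧
      M.IsBase (A₁ ∪ B₂ ∪ K) ∧ M.IsBase (A₂ ∪ B₁ ∪ K) := by
  have hAE : A ⊆ M.E := subset_union_left.trans hbA.subset_ground
  have hAfin : A.Finite := hE.subset hAE
  have hKfin : K.Finite := hE.subset (subset_union_right.trans hbA.subset_ground)
  have hB₁fin : B₁.Finite :=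
    hE.subset ((subset_union_left.trans subset_union_left).trans hbB.subset_ground)
  have hB₂fin : B₂.Finite :=
    hE.subset ((subset_union_right.trans subset_union_left).trans hbB.subset_ground)
  have hC₁ : M.Indep (B₂ ∪ K) := hbB.indep.subset (by
    intro x hx; rcases hx with hx | hx
    · exact Or.inl (Or.inr hx)
    · exact Or.inr hx)
  have hC₂ : M.Indep (B₁ ∪ K) := hbB.indep.subset (by
    intro x hx; rcases hx with hx | hx
    · exact Or.inl (Or.inl hx)
    · exact Or.inr hx)
  have hcond : ∀ S, S ⊆ A →
      S.ncard + M.mrk (B₂ ∪ K) + M.mrk (B₁ ∪ K)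
        ≤ M.mrk (S ∪ (B₂ ∪ K)) + M.mrk (S ∪ (B₁ ∪ K)) := by
    intro S hSA
    have hSfin : S.Finite := hAfin.subset hSA
    have hsub := M.mrk_submod hE (S ∪ (B₂ ∪ K)) (S ∪ (B₁ ∪ K))
    have h1 : (B₁ ∪ B₂ ∪ K).ncard ≤ M.mrk ((S ∪ (B₂ ∪ K)) ∪ (S ∪ (B₁ ∪ K))) := by
      rw [← hbB.indep.mrk_eq]
      refine mrk_mono hE ?_
      intro x hx
      simp only [mem_union] at hx ⊢
      tauto
    have h2 : (S ∪ K).ncard ≤ M.mrk ((S ∪ (B₂ ∪ K)) ∩ (S ∪ (B₁ ∪ K))) := by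
      have hSK : M.Indep (S ∪ K) :=
        hbA.indep.subset (union_subset_union_left K hSA)
      rw [← hSK.mrk_eq]
      refine mrk_mono hE ?_
      intro x hx
      rcases hx with hx | hx
      · exact ⟨Or.inl hx, Or.inl hx⟩
      · exact ⟨Or.inr (Or.inr hx), Or.inr (Or.inr hx)⟩
    rw [hC₁.mrk_eq, hC₂.mrk_eq]
    have e1 : (B₂ ∪ K).ncard = B₂.ncard + K.ncard :=
      ncard_union_eq (hKB.symm.mono_left subset_union_right) hB₂fin hKfin
    have e2 : (B₁ ∪ K).ncard = B₁.ncard + K.ncard :=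
      ncard_union_eq (hKB.symm.mono_left subset_union_left) hB₁fin hKfin
    have e3 : (B₁ ∪ B₂ ∪ K).ncard = B₁.ncard + B₂.ncard + K.ncard := by
      rw [ncard_union_eq (hKB.symm) (hB₁fin.union hB₂fin) hKfin,
        ncard_union_eq hB12 hB₁fin hB₂fin]
    have e4 : (S ∪ K).ncard = S.ncard + K.ncard :=
      ncard_union_eq ((hKA.symm.mono_left hSA)) hSfin hKfin
    omega
  obtain ⟨A₁, A₂, hun, hdj, hi1, hi2⟩ :=
    M.part2 hE A.ncard A (B₂ ∪ K) (B₁ ∪ K) rfl hAE hC₁ hC₂ hcond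
  have hA₁A : A₁ ⊆ A := hun ▸ subset_union_left
  have hA₂A : A₂ ⊆ A := hun ▸ subset_union_right
  -- cardinality bookkeeping
  have hr : M.mrk M.E = (A ∪ K).ncard := (hbA.ncard_eq_mrk_ground).symm
  have hrB : (B₁ ∪ B₂ ∪ K).ncard = M.mrk M.E := hbB.ncard_eq_mrk_ground
  have hAK : (A ∪ K).ncard = A.ncard + K.ncard := ncard_union_eq hKA.symm hAfin hKfin
  have hA12 : A.ncard = A₁.ncard + A₂.ncard := by
    rw [← hun]; exact ncard_union_eq hdj (hAfin.subset hA₁A) (hAfin.subset hA₂A)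
  have e3 : (B₁ ∪ B₂ ∪ K).ncard = B₁.ncard + B₂.ncard + K.ncard := by
    rw [ncard_union_eq (hKB.symm) (hB₁fin.union hB₂fin) hKfin,
      ncard_union_eq hB12 hB₁fin hB₂fin]
  have ec1 : (A₁ ∪ (B₂ ∪ K)).ncard = A₁.ncard + B₂.ncard + K.ncard := by
    rw [ncard_union_eq (disjoint_union_right.mpr
        ⟨(hAB.mono_left hA₁A).mono_right subset_union_right, (hKA.symm.mono_left hA₁A)⟩)
      (hAfin.subset hA₁A) (hB₂fin.union hKfin),
      ncard_union_eq (hKB.symm.mono_left subset_union_right) hB₂fin hKfin]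
    omega
  have ec2 : (A₂ ∪ (B₁ ∪ K)).ncard = A₂.ncard + B₁.ncard + K.ncard := by
    rw [ncard_union_eq (disjoint_union_right.mpr
        ⟨(hAB.mono_left hA₂A).mono_right subset_union_left, (hKA.symm.mono_left hA₂A)⟩)
      (hAfin.subset hA₂A) (hB₁fin.union hKfin),
      ncard_union_eq (hKB.symm.mono_left subset_union_left) hB₁fin hKfin]
    omega
  have hle1 : (A₁ ∪ (B₂ ∪ K)).ncard ≤ M.mrk M.E :=
    hi1.ncard_le_mrk hE hi1.subset_ground
  have hle2 : (A₂ ∪ (B₁ ∪ K)).ncard ≤ M.mrk M.E :=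
    hi2.ncard_le_mrk hE hi2.subset_ground
  have hb1 : M.IsBase (A₁ ∪ (B₂ ∪ K)) := hi1.base_of_mrk_le_ncard hE (by omega)
  have hb2 : M.IsBase (A₂ ∪ (B₁ ∪ K)) := hi2.base_of_mrk_le_ncard hE (by omega)
  exact ⟨A₁, A₂, hun, hdj, by rwa [union_assoc], by rwa [union_assoc]⟩

lemma finUnion_succ {k : ℕ} (f : Fin (k + 1) → Set α) :
    (⋃ i, f i) = (⋃ i : Fin k, f i.castSucc) ∪ f (Fin.last k) := by
  ext x
  simp only [mem_iUnion, mem_union]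
  constructor
  · rintro ⟨i, hi⟩
    rcases eq_or_ne i (Fin.last k) with rfl | h
    · exact Or.inr hi
    · exact Or.inl ⟨i.castPred h, by rwa [Fin.castSucc_castPred]⟩
  · rintro (⟨i, hi⟩ | hi)
    · exact ⟨i.castSucc, hi⟩
    · exact ⟨Fin.last k, hi⟩

/-- The partition exchange theorem for pairwise disjoint `A`, `B`, `K`. -/
lemma Pk (hE : M.E.Finite) : ∀ (k : ℕ) (K A B : Set α), M.IsBase (A ∪ K) → M.IsBase (B ∪ K) →
    Disjoint A B → Disjoint K A → Disjoint K B →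
    ∀ Bp : Fin k → Set α, Pairwise (Function.onFun Disjoint Bp) → (⋃ i, Bp i) = B →
    ∃ Ap : Fin k → Set α, Pairwise (Function.onFun Disjoint Ap) ∧ (⋃ i, Ap i) = A ∧
      ∀ i, M.IsBase ((A \ Ap i) ∪ Bp i ∪ K) := by
  intro k
  induction k with
  | zero =>
    intro K A B hA hB hAB hKA hKB Bp _ hBun
    have hB0 : B = ∅ := by rw [← hBun]; exact iUnion_of_empty _
    rw [hB0, empty_union] at hB
    have hKAK : K = A ∪ K := hB.eq_of_subset_isBase hA subset_union_right
    have hA0 : A = ∅ := by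
      rw [eq_empty_iff_forall_notMem]
      intro x hx
      exact (disjoint_left.mp hKA) (hKAK ▸ Or.inl hx : x ∈ K) hx
    refine ⟨fun _ => ∅, ?_, ?_, fun i => i.elim0⟩
    · intro i j _; exact i.elim0
    · rw [hA0]; simp
  | succ k ih =>
    intro K A B hA hB hAB hKA hKB Bp hBdisj hBun
    set Bl := Bp (Fin.last k) with hBl
    set Br := ⋃ i : Fin k, Bp i.castSucc with hBr
    have hsplit : Br ∪ Bl = B := by rw [← hBun, finUnion_succ]
    have hBlB : Bl ⊆ B := hsplit ▸ subset_union_right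
    have hBrB : Br ⊆ B := hsplit ▸ subset_union_left
    have hdisjrl : Disjoint Br Bl := by
      refine disjoint_iUnion_left.mpr fun i => ?_
      exact hBdisj (Fin.castSucc_lt_last i).ne
    have hbB : M.IsBase (Br ∪ Bl ∪ K) := by rwa [hsplit]
    obtain ⟨A₁, A₂, hun, hd, hb1, hb2⟩ := M.symm_exchange hE (A := A) (B₁ := Br)
      (B₂ := Bl) (K := K) hA hbB (by rwa [hsplit]) hKA (by rwa [hsplit]) hdisjrl
    have hA₁A : A₁ ⊆ A := hun ▸ subset_union_left
    have hA₂A : A₂ ⊆ A := hun ▸ subset_union_right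
    have hBA1 : M.IsBase (A₁ ∪ (K ∪ A₂)) := by
      have : A₁ ∪ (K ∪ A₂) = A ∪ K := by
        rw [← hun]; ext x; simp only [mem_union]; tauto
      rwa [this]
    have hBB1 : M.IsBase (Br ∪ (K ∪ A₂)) := by
      have : Br ∪ (K ∪ A₂) = A₂ ∪ Br ∪ K := by
        ext x; simp only [mem_union]; tauto
      rwa [this]
    obtain ⟨Ap', hpw', hup', hbase'⟩ := ih (K ∪ A₂) A₁ Br hBA1 hBB1
      (hAB.mono hA₁A hBrB)
      (disjoint_union_left.mpr ⟨hKA.mono_right hA₁A, hd.symm⟩)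
      (disjoint_union_left.mpr ⟨hKB.mono_right hBrB, hAB.mono hA₂A hBrB⟩)
      (fun i => Bp i.castSucc)
      (fun i j hij => hBdisj ((Fin.castSucc_injective k).ne hij)) rfl
    have hAp'sub : ∀ i, Ap' i ⊆ A₁ := fun i => hup' ▸ subset_iUnion Ap' i
    classical
    set Ap : Fin (k + 1) → Set α :=
      fun i => if h : i = Fin.last k then A₂ else Ap' (i.castPred h) with hApdef
    have hAplast : Ap (Fin.last k) = A₂ := by simp [hApdef]
    have hApc : ∀ c : Fin k, Ap c.castSucc = Ap' c := by
      intro c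
      simp [hApdef, (Fin.castSucc_lt_last c).ne, Fin.castPred_castSucc]
    refine ⟨Ap, ?_, ?_, ?_⟩
    · intro i j hij
      rcases eq_or_ne i (Fin.last k) with rfl | hi
      · rcases eq_or_ne j (Fin.last k) with rfl | hj
        · exact absurd rfl hij
        · obtain ⟨c, rfl⟩ : ∃ c : Fin k, j = c.castSucc :=
            ⟨j.castPred hj, (Fin.castSucc_castPred j hj).symm⟩
          show Disjoint (Ap (Fin.last k)) (Ap c.castSucc)
          rw [hAplast, hApc]
          exact hd.symm.mono_right (hAp'sub _)
      · obtain ⟨c, rfl⟩ : ∃ c : Fin k, i = c.castSucc :=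
          ⟨i.castPred hi, (Fin.castSucc_castPred i hi).symm⟩
        rcases eq_or_ne j (Fin.last k) with rfl | hj
        · show Disjoint (Ap c.castSucc) (Ap (Fin.last k))
          rw [hAplast, hApc]
          exact hd.mono_left (hAp'sub _)
        · obtain ⟨c', rfl⟩ : ∃ c' : Fin k, j = c'.castSucc :=
            ⟨j.castPred hj, (Fin.castSucc_castPred j hj).symm⟩
          show Disjoint (Ap c.castSucc) (Ap c'.castSucc)
          rw [hApc, hApc]
          exact hpw' ((Fin.castSucc_injective k).ne_iff.mp hij)
    · rw [finUnion_succ Ap, hAplast]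
      have h1 : (⋃ c : Fin k, Ap c.castSucc) = A₁ := by
        rw [← hup']
        exact iUnion_congr hApc
      rw [h1, hun]
    · intro i
      rcases eq_or_ne i (Fin.last k) with rfl | hi
      · rw [hAplast]
        have : A \ A₂ = A₁ := by
          rw [← hun, union_diff_cancel_right (fun x hx =>
            (hd.le_bot ⟨hx.1, hx.2⟩ : x ∈ (∅ : Set α)))]
        rw [this]
        exact hb1
      · obtain ⟨c, rfl⟩ : ∃ c : Fin k, i = c.castSucc :=
          ⟨i.castPred hi, (Fin.castSucc_castPred i hi).symm⟩
        rw [hApc]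
        have hd2 : A₂ \ Ap' c = A₂ := (hd.symm.mono_right (hAp'sub c)).sdiff_eq_left
        have hAeq : A \ Ap' c = (A₁ \ Ap' c) ∪ A₂ := by
          rw [← hun, union_diff_distrib, hd2]
        have hgoal : (A \ Ap' c) ∪ Bp c.castSucc ∪ K
            = (A₁ \ Ap' c) ∪ Bp c.castSucc ∪ (K ∪ A₂) := by
          rw [hAeq]; ext x; simp only [mem_union]; tauto
        rw [hgoal]
        exact hbase' c

end Matroid

open Set

/-- If `A` and `B` are bases of a matroid `M` on a finite ground set, then for every
partition `B = B₁ ⊔ ⋯ ⊔ B_k` there is a partition `A = A₁ ⊔ ⋯ ⊔ A_k` such that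
`(A \ A_i) ∪ B_i` is a basis for every `i`. -/
theorem basis_partition_exchange' {α : Type*} (M : Matroid α) (hE : M.E.Finite)
    (A B : Set α) (hA : M.IsBase A) (hB : M.IsBase B) (k : ℕ) (Bp : Fin k → Set α)
    (hBdisj : Pairwise (Function.onFun Disjoint Bp)) (hBun : ⋃ i, Bp i = B) :
    ∃ Ap : Fin k → Set α, Pairwise (Function.onFun Disjoint Ap) ∧ (⋃ i, Ap i = A) ∧
      ∀ i, M.IsBase ((A \ Ap i) ∪ Bp i) := by
  have hBpB : ∀ i, Bp i ⊆ B := fun i => hBun ▸ subset_iUnion Bp i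
  have hbA0 : M.IsBase ((A \ B) ∪ (A ∩ B)) := by rwa [diff_union_inter]
  have hbB0 : M.IsBase ((B \ A) ∪ (A ∩ B)) := by rwa [inter_comm, diff_union_inter]
  have hd1 : Disjoint (A \ B) (B \ A) :=
    disjoint_left.mpr fun x hx hx' => hx'.2 hx.1
  have hd2 : Disjoint (A ∩ B) (A \ B) :=
    disjoint_left.mpr fun x hx hx' => hx'.2 hx.2
  have hd3 : Disjoint (A ∩ B) (B \ A) :=
    disjoint_left.mpr fun x hx hx' => hx'.2 hx.1
  have hpw' : Pairwise (Function.onFun Disjoint (fun i => Bp i \ A)) :=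
    fun i j hij => (hBdisj hij).mono diff_subset diff_subset
  have hun' : (⋃ i, Bp i \ A) = B \ A := by rw [← iUnion_diff, hBun]
  obtain ⟨Ap', hApw, hAup, hAbase⟩ := M.Pk hE k (A ∩ B) (A \ B) (B \ A)
    hbA0 hbB0 hd1 hd2 hd3 (fun i => Bp i \ A) hpw' hun'
  have hAp'sub : ∀ i, Ap' i ⊆ A \ B := fun i => hAup ▸ subset_iUnion Ap' i
  refine ⟨fun i => Ap' i ∪ (A ∩ Bp i), ?_, ?_, ?_⟩
  · intro i j hij
    have hd4 : Disjoint (Ap' i) (A ∩ Bp j) :=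
      disjoint_left.mpr fun x hx hx' => (hAp'sub i hx).2 (hBpB j hx'.2)
    have hd5 : Disjoint (A ∩ Bp i) (Ap' j) :=
      disjoint_right.mpr fun x hx hx' => (hAp'sub j hx).2 (hBpB i hx'.2)
    exact disjoint_union_left.mpr
      ⟨disjoint_union_right.mpr ⟨hApw hij, hd4⟩,
       disjoint_union_right.mpr ⟨hd5, (hBdisj hij).mono inter_subset_right
          inter_subset_right⟩⟩
  · show (⋃ i, (Ap' i ∪ (A ∩ Bp i))) = A
    rw [iUnion_union_distrib, hAup, ← inter_iUnion, hBun, diff_union_inter]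
  · intro i
    have h1 := hAp'sub i
    have h2 := hBpB i
    have hset : (A \ (Ap' i ∪ (A ∩ Bp i))) ∪ Bp i
        = ((A \ B) \ Ap' i) ∪ (Bp i \ A) ∪ (A ∩ B) := by
      ext x
      have hx1 := @h1 x
      have hx2 := @h2 x
      simp only [mem_union, mem_diff, mem_inter_iff] at *
      tauto
    rw [hset]
    exact hAbase i
end

section
/- Let M be a matroid on a finite ground set E with rank function r, let Q₁, …, Q_d be subsets of E, and let A ⊆ E. For each i ∈ {1, …, d} define 𝐐_i = {e ∈ E : e belongs to at least i of the sets Q₁, …, Q_d}. Then Σ_{i=1}^d r(A ∩ Q_i) ≥ Σ_{i=1}^d r(A ∩ 𝐐_i). -/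
/-- The rank of a set `A` in a matroid `M`: the maximum cardinality of an
independent subset of `A`. -/
noncomputable def matroidRank {α : Type*} (M : Matroid α) (A : Set α) : ℕ :=
  sSup {n | ∃ I, M.Indep I ∧ I ⊆ A ∧ I.ncard = n}

section Aux

variable {α : Type*} {M : Matroid α}

lemma matroidRank_bddAbove (hE : M.E.Finite) {X : Set α} (hX : X ⊆ M.E) :
    BddAbove {n | ∃ I, M.Indep I ∧ I ⊆ X ∧ I.ncard = n} := by
  refine ⟨M.E.ncard, ?_⟩
  rintro n ⟨I, _, hIX, rfl⟩
  exact Set.ncard_le_ncard (hIX.trans hX) hE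

lemma ncard_le_matroidRank (hE : M.E.Finite) {I X : Set α} (hI : M.Indep I) (hIX : I ⊆ X)
    (hX : X ⊆ M.E) : I.ncard ≤ matroidRank M X :=
  le_csSup (matroidRank_bddAbove hE hX) ⟨I, hI, hIX, rfl⟩

lemma matroidRank_eq_of_basis (hE : M.E.Finite) {B X : Set α} (hB : M.IsBasis B X) :
    matroidRank M X = B.ncard := by
  have hX : X ⊆ M.E := hB.subset_ground
  refine le_antisymm ?_ (ncard_le_matroidRank hE hB.indep hB.subset hX)
  refine csSup_le ⟨0, ∅, M.empty_indep, Set.empty_subset _, Set.ncard_empty α⟩ ?_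
  rintro n ⟨I, hI, hIX, rfl⟩
  obtain ⟨J, hJ, hIJ⟩ := hI.subset_isBasis_of_subset hIX hX
  have h1 : I.ncard ≤ J.ncard :=
    Set.ncard_le_ncard hIJ (hE.subset (hJ.subset.trans hX))
  have h2 : J.encard = B.encard := hJ.encard_eq_encard hB
  have h3 : J.ncard = B.ncard := by rw [Set.ncard_def, h2, ← Set.ncard_def]
  omega

lemma matroidRank_submod (hE : M.E.Finite) {X Y : Set α} (hX : X ⊆ M.E) (hY : Y ⊆ M.E) :
    matroidRank M (X ∪ Y) + matroidRank M (X ∩ Y) ≤ matroidRank M X + matroidRank M Y := by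
  have hXY : X ∪ Y ⊆ M.E := Set.union_subset hX hY
  obtain ⟨I, hI⟩ := M.exists_isBasis (X ∩ Y) ((Set.inter_subset_left).trans hX)
  obtain ⟨J, hJ, hIJ⟩ := hI.indep.subset_isBasis_of_subset
    (hI.subset.trans ((Set.inter_subset_left).trans Set.subset_union_left)) hXY
  rw [matroidRank_eq_of_basis hE hJ, matroidRank_eq_of_basis hE hI]
  have hJfin : J.Finite := hE.subset (hJ.subset.trans hXY)
  have hJX : (J ∩ X).ncard ≤ matroidRank M X :=
    ncard_le_matroidRank hE (hJ.indep.subset Set.inter_subset_left) Set.inter_subset_right hX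
  have hJY : (J ∩ Y).ncard ≤ matroidRank M Y :=
    ncard_le_matroidRank hE (hJ.indep.subset Set.inter_subset_left) Set.inter_subset_right hY
  have hunion : (J ∩ X) ∪ (J ∩ Y) = J := by
    rw [← Set.inter_union_distrib_left]
    exact Set.inter_eq_self_of_subset_left hJ.subset
  have hinter : (J ∩ X) ∩ (J ∩ Y) = I := by
    have : (J ∩ X) ∩ (J ∩ Y) = J ∩ (X ∩ Y) := by
      ext e; simp [Set.mem_inter_iff]; tauto
    rw [this]
    exact hI.inter_eq_of_subset_indep hIJ hJ.indep
  have hkey := Set.ncard_union_add_ncard_inter (J ∩ X) (J ∩ Y)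
    (hJfin.subset Set.inter_subset_left) (hJfin.subset Set.inter_subset_left)
  rw [hunion, hinter] at hkey
  omega

/-- Merging a single set into a chain, using only submodularity. -/
lemma merge_lemma {α : Type*} (f : Set α → ℕ) (A : Set α)
    (hsub : ∀ X Y, X ⊆ A → Y ⊆ A → f (X ∪ Y) + f (X ∩ Y) ≤ f X + f Y) :
    ∀ (d : ℕ) (T : ℕ → Set α), (∀ i, T (i + 1) ⊆ T i) → (∀ i, T i ⊆ A) →
      T (d + 1) = ∅ → ∀ (R : Set α), R ⊆ T 0 →
      ∑ i ∈ Finset.range (d + 1), f (T (i + 1) ∪ (T i ∩ R)) ≤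
        ∑ i ∈ Finset.range d, f (T (i + 1)) + f R := by
  intro d
  induction d with
  | zero =>
    intro T hchain hTA hTd R hR
    simp only [Finset.range_one, Finset.sum_singleton, Finset.range_zero,
      Finset.sum_empty, zero_add, hTd]
    rw [Set.empty_union, Set.inter_eq_self_of_subset_right hR]
  | succ d ih =>
    intro T hchain hTA hTd R hR
    have hanti : ∀ i j, j ≤ i → T i ⊆ T j := by
      intro i j h
      exact antitone_nat_of_succ_le hchain h
    -- split off the i = 0 term
    rw [Finset.sum_range_succ' (fun i => f (T (i + 1) ∪ (T i ∩ R))) (d + 1)]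
    have h0 : T 0 ∩ R = R := Set.inter_eq_self_of_subset_right hR
    rw [h0]
    -- rewrite the shifted sum so the IH applies with T' i = T (i+1), R' = T 1 ∩ R
    have hre : ∀ i ∈ Finset.range (d + 1),
        f (T (i + 1 + 1) ∪ (T (i + 1) ∩ R)) =
          f (T (i + 1 + 1) ∪ (T (i + 1) ∩ (T 1 ∩ R))) := by
      intro i _
      have : T (i + 1) ∩ (T 1 ∩ R) = T (i + 1) ∩ R := by
        rw [← Set.inter_assoc, Set.inter_eq_self_of_subset_left (hanti (i + 1) 1 (by omega))]
      rw [this]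
    rw [Finset.sum_congr rfl hre]
    have hIH : ∑ i ∈ Finset.range (d + 1), f (T (i + 1 + 1) ∪ (T (i + 1) ∩ (T 1 ∩ R))) ≤
        ∑ i ∈ Finset.range d, f (T (i + 1 + 1)) + f (T 1 ∩ R) :=
      ih (fun i => T (i + 1)) (fun i => hchain (i + 1)) (fun i => hTA (i + 1))
        hTd (T 1 ∩ R) Set.inter_subset_left
    have hsub1 : f (T 1 ∪ R) + f (T 1 ∩ R) ≤ f (T 1) + f R :=
      hsub (T 1) R (hTA 1) (hR.trans (hTA 0))
    rw [Finset.sum_range_succ' (fun i => f (T (i + 1))) d]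
    simp only [zero_add]
    omega

end Aux

/-- Given subsets `Q₁, …, Q_d` of the ground set of a matroid `M` and `A ⊆ E`, with
`𝐐_i = {e ∈ E : e lies in at least i of the Q_j}`, one has
`Σ_i r(A ∩ Q_i) ≥ Σ_i r(A ∩ 𝐐_i)`. (An index `i : Fin d` stands for the value
`i + 1 ∈ {1, …, d}`.) -/
theorem rank_sum_ge_chain_rank_sum {α : Type*} (M : Matroid α) (hE : M.E.Finite)
    (d : ℕ) (Q : Fin d → Set α) (hQ : ∀ i, Q i ⊆ M.E) (A : Set α) (hA : A ⊆ M.E) :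
    ∑ i : Fin d,
        matroidRank M (A ∩ {e ∈ M.E | (i : ℕ) + 1 ≤ {j : Fin d | e ∈ Q j}.ncard}) ≤
      ∑ i : Fin d, matroidRank M (A ∩ Q i) := by
  induction d with
  | zero => simp
  | succ d ih =>
    classical
    set f : Set α → ℕ := matroidRank M with hf
    -- counting facts
    have hcount_split : ∀ e, {j : Fin (d + 1) | e ∈ Q j}.ncard =
        {j : Fin d | e ∈ Q j.castSucc}.ncard + (if e ∈ Q (Fin.last d) then 1 else 0) := by
      intro e
      rw [Set.ncard_eq_toFinset_card', Set.ncard_eq_toFinset_card', Set.toFinset_setOf,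
        Set.toFinset_setOf, Finset.card_filter, Finset.card_filter, Fin.sum_univ_castSucc]
    have hcount_le : ∀ e, {j : Fin d | e ∈ Q (Fin.castSucc j)}.ncard ≤ d := by
      intro e
      rw [Set.ncard_eq_toFinset_card', Set.toFinset_setOf]
      simpa using Finset.card_filter_le Finset.univ (fun j : Fin d => e ∈ Q j.castSucc)
    -- the chain for the first d sets
    set T : ℕ → Set α := fun i => A ∩ {e ∈ M.E | i ≤ {j : Fin d | e ∈ Q j.castSucc}.ncard}
      with hT
    set R : Set α := A ∩ Q (Fin.last d) with hRdef
    have hchain : ∀ i, T (i + 1) ⊆ T i := by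
      intro i e he
      exact ⟨he.1, he.2.1, by have := he.2.2; omega⟩
    have hTA : ∀ i, T i ⊆ A := fun i => Set.inter_subset_left
    have hTd : T (d + 1) = ∅ := by
      ext e
      simp only [hT, Set.mem_inter_iff, Set.mem_setOf_eq, Set.mem_empty_iff_false, iff_false]
      rintro ⟨-, -, h⟩
      have := hcount_le e
      omega
    have hT0 : T 0 = A := by
      ext e
      simp only [hT, Set.mem_inter_iff, Set.mem_setOf_eq]
      exact ⟨fun h => h.1, fun h => ⟨h, hA h, Nat.zero_le _⟩⟩
    have hRT0 : R ⊆ T 0 := by rw [hT0]; exact Set.inter_subset_left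
    -- key set identity
    have hS : ∀ i : ℕ, A ∩ {e ∈ M.E | i + 1 ≤ {j : Fin (d + 1) | e ∈ Q j}.ncard} =
        T (i + 1) ∪ (T i ∩ R) := by
      intro i
      ext e
      simp only [hT, hRdef, Set.mem_inter_iff, Set.mem_union, Set.mem_setOf_eq]
      constructor
      · rintro ⟨heA, heE, hcnt⟩
        rw [hcount_split e] at hcnt
        by_cases hlast : e ∈ Q (Fin.last d)
        · simp only [hlast, if_true] at hcnt
          by_cases h2 : i + 1 ≤ {j : Fin d | e ∈ Q j.castSucc}.ncard
          · exact Or.inl ⟨heA, heE, h2⟩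
          · exact Or.inr ⟨⟨heA, heE, by omega⟩, heA, hlast⟩
        · simp only [hlast, if_false] at hcnt
          exact Or.inl ⟨heA, heE, by omega⟩
      · rintro (⟨heA, heE, hcnt⟩ | ⟨⟨heA, heE, hcnt⟩, -, hlast⟩)
        · refine ⟨heA, heE, ?_⟩
          rw [hcount_split e]
          split <;> omega
        · refine ⟨heA, heE, ?_⟩
          rw [hcount_split e]
          simp only [hlast, if_true]
          omega
    -- submodularity hypothesis for the merge lemma
    have hsub : ∀ X Y, X ⊆ A → Y ⊆ A → f (X ∪ Y) + f (X ∩ Y) ≤ f X + f Y := fun X Y hX hY =>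
      matroidRank_submod hE (hX.trans hA) (hY.trans hA)
    have hmerge := merge_lemma f A hsub d T hchain hTA hTd R hRT0
    -- rewrite the goal's LHS as the merge LHS
    have hLHS : ∑ i : Fin (d + 1),
        matroidRank M (A ∩ {e ∈ M.E | (i : ℕ) + 1 ≤ {j : Fin (d + 1) | e ∈ Q j}.ncard}) =
        ∑ i ∈ Finset.range (d + 1), f (T (i + 1) ∪ (T i ∩ R)) := by
      exact (Fin.sum_univ_eq_sum_range (fun k => matroidRank M
          (A ∩ {e ∈ M.E | k + 1 ≤ {j : Fin (d + 1) | e ∈ Q j}.ncard})) (d + 1)).trans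
        (Finset.sum_congr rfl fun i _ => by rw [hS i])
    -- rewrite the middle sum as a Fin d sum
    have hMID : ∑ i ∈ Finset.range d, f (T (i + 1)) =
        ∑ i : Fin d,
          matroidRank M (A ∩ {e ∈ M.E | (i : ℕ) + 1 ≤ {j : Fin d | e ∈ Q j.castSucc}.ncard}) :=
      (Fin.sum_univ_eq_sum_range (fun k => matroidRank M
        (A ∩ {e ∈ M.E | k + 1 ≤ {j : Fin d | e ∈ Q j.castSucc}.ncard})) d).symm
    have hIH := ih (fun j => Q j.castSucc) (fun j => hQ j.castSucc)
    rw [hLHS, Fin.sum_univ_castSucc (fun i : Fin (d + 1) => matroidRank M (A ∩ Q i))]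
    calc ∑ i ∈ Finset.range (d + 1), f (T (i + 1) ∪ (T i ∩ R))
        ≤ ∑ i ∈ Finset.range d, f (T (i + 1)) + f R := hmerge
      _ ≤ ∑ i : Fin d, matroidRank M (A ∩ Q i.castSucc) + f R := by
          rw [hMID]; exact Nat.add_le_add_right hIH _
      _ = ∑ i : Fin d, matroidRank M (A ∩ Q i.castSucc) +
            matroidRank M (A ∩ Q (Fin.last d)) := rfl
end

section
/- Let M be a matroid on a finite ground set E with rank function r, and let a, b be positive integers. Then E admits an a-covering by b independent sets of M if and only if b · r(A) ≥ a · |A| for every subset A ⊆ E. -/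
open Set

namespace EdmondsAux

variable {α : Type*} {N : Matroid α} {I J A : Set α}

/-- An independent set inside the closure of an independent set is at most as large. -/
lemma encard_le_of_subset_closure (hJ : N.Indep J) (hI : N.Indep I)
    (hJI : J ⊆ N.closure I) : J.encard ≤ I.encard := by
  by_contra hlt
  push_neg at hlt
  obtain ⟨e, he, hins⟩ := hI.augment hJ hlt
  rw [hI.insert_indep_iff_of_notMem he.2] at hins
  exact hins.2 (hJI he.1)

lemma ncard_le_of_subset_closure (hJ : N.Indep J) (hI : N.Indep I) (hIfin : I.Finite)
    (hJI : J ⊆ N.closure I) : J.ncard ≤ I.ncard := by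
  have h := encard_le_of_subset_closure hJ hI hJI
  rw [Set.ncard, Set.ncard]
  exact ENat.toNat_le_toNat h hIfin.encard_lt_top.ne

lemma bddAbove_rankSet (hA : A.Finite) :
    BddAbove {n | ∃ I, N.Indep I ∧ I ⊆ A ∧ I.ncard = n} := by
  refine ⟨A.ncard, fun n ⟨I, _, hIA, hn⟩ => ?_⟩
  exact hn ▸ Set.ncard_le_ncard hIA hA

lemma le_matroidRank (hA : A.Finite) (hI : N.Indep I) (hIA : I ⊆ A) :
    I.ncard ≤ matroidRank N A :=
  le_csSup (bddAbove_rankSet hA) ⟨I, hI, hIA, rfl⟩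

lemma matroidRank_le {m : ℕ} (h : ∀ I, N.Indep I → I ⊆ A → I.ncard ≤ m) :
    matroidRank N A ≤ m :=
  csSup_le ⟨0, ∅, N.empty_indep, empty_subset _, by simp⟩
    (fun n ⟨I, hI, hIA, hn⟩ => hn ▸ h I hI hIA)

lemma exists_indep_rank (hA : A.Finite) :
    ∃ I, N.Indep I ∧ I ⊆ A ∧ I.ncard = matroidRank N A := by
  have hne : {n | ∃ I, N.Indep I ∧ I ⊆ A ∧ I.ncard = n}.Nonempty :=
    ⟨0, ∅, N.empty_indep, empty_subset _, by simp⟩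
  exact Nat.sSup_mem hne (bddAbove_rankSet hA)

/-- Triangular multi-exchange: swapping in `x j` for `y j` for all `j ∈ S` preserves
independence, given fundamental-circuit style conditions. -/
lemma tx (hI : N.Indep I) (S : Finset ℕ) (x y : ℕ → α)
    (hy : ∀ j ∈ S, y j ∈ I) (hx : ∀ j ∈ S, x j ∉ I)
    (hxE : ∀ j ∈ S, x j ∈ N.E)
    (hxcl : ∀ j ∈ S, x j ∈ N.closure I)
    (h1 : ∀ j ∈ S, x j ∉ N.closure (I \ {y j}))
    (h3 : ∀ j ∈ S, ∀ j' ∈ S, j < j' → x j ∈ N.closure (I \ {y j'}))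
    (hxinj : ∀ j ∈ S, ∀ j' ∈ S, j ≠ j' → x j ≠ x j')
    (hyinj : ∀ j ∈ S, ∀ j' ∈ S, j ≠ j' → y j ≠ y j') :
    N.Indep ((x '' S) ∪ (I \ (y '' S))) := by
  classical
  induction S using Finset.strongInduction generalizing I with
  | _ S ih =>
  rcases S.eq_empty_or_nonempty with rfl | hSne
  · simpa using hI
  set j₀ := S.min' hSne with hj₀
  have hj₀S : j₀ ∈ S := S.min'_mem hSne
  set S' := S.erase j₀ with hS'
  have hS'lt : S' ⊂ S := Finset.erase_ssubset hj₀S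
  set I' := insert (x j₀) (I \ {y j₀}) with hI'def
  have hxI0 : x j₀ ∉ I \ {y j₀} := fun h => hx j₀ hj₀S h.1
  have hI'i : N.Indep I' := by
    rw [(hI.subset diff_subset).insert_indep_iff_of_notMem hxI0]
    exact ⟨hxE j₀ hj₀S, h1 j₀ hj₀S⟩
  -- the closure of I' contains I
  have hy₀cl : y j₀ ∈ N.closure I' := by
    have hx₀ : x j₀ ∈ N.closure (insert (y j₀) (I \ {y j₀})) \ N.closure (I \ {y j₀}) := by
      rw [insert_diff_singleton, insert_eq_of_mem (hy j₀ hj₀S)]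
      exact ⟨hxcl j₀ hj₀S, h1 j₀ hj₀S⟩
    exact (Matroid.closure_exchange hx₀).1
  have hIsub : I ⊆ N.closure I' := by
    intro z hz
    rcases eq_or_ne z (y j₀) with rfl | hne
    · exact hy₀cl
    · exact N.subset_closure I' hI'i.subset_ground (mem_insert_of_mem _ ⟨hz, hne⟩)
  have hclI : N.closure I ⊆ N.closure I' :=
    N.closure_subset_closure_of_subset_closure hIsub
  -- min property
  have hj₀min : ∀ j ∈ S', j₀ < j := fun j hj =>
    lt_of_le_of_ne (S.min'_le j (Finset.mem_of_mem_erase hj))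
      (Ne.symm (Finset.ne_of_mem_erase hj))
  -- key: for j ∈ S', closure of I' minus y j is contained in closure of I minus y j
  have hkey : ∀ j ∈ S', N.closure (I' \ {y j}) ⊆ N.closure (I \ {y j}) := by
    intro j hj
    refine N.closure_subset_closure_of_subset_closure ?_
    intro z hz
    rcases hz with ⟨hz, hzne⟩
    rcases mem_insert_iff.1 hz with rfl | hzI
    · exact h3 j₀ hj₀S j (Finset.mem_of_mem_erase hj) (hj₀min j hj)
    · exact N.subset_closure _ ((diff_subset.trans hI.subset_ground)) ⟨hzI.1, hzne⟩
  -- key2 : closure of I minus y j' is contained in closure of I' minus y j'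
  have hsub1 : ∀ j' ∈ S', I' \ {y j'} = insert (x j₀) ((I \ {y j₀}) \ {y j'}) := by
    intro j' hj'
    have hxy : x j₀ ≠ y j' := fun h => hx j₀ hj₀S (h ▸ hy j' (Finset.mem_of_mem_erase hj'))
    ext z
    simp only [hI'def, mem_diff, mem_insert_iff, mem_singleton_iff]
    constructor
    · rintro ⟨rfl | hz, hz2⟩
      · exact Or.inl rfl
      · exact Or.inr ⟨hz, hz2⟩
    · rintro (rfl | ⟨hz, hz2⟩)
      · exact ⟨Or.inl rfl, hxy⟩
      · exact ⟨Or.inr hz, hz2⟩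
  have hkey2 : ∀ j' ∈ S', N.closure (I \ {y j'}) ⊆ N.closure (I' \ {y j'}) := by
    intro j' hj'
    refine N.closure_subset_closure_of_subset_closure ?_
    intro z hz
    have hIsubg : I' \ {y j'} ⊆ N.E := diff_subset.trans hI'i.subset_ground
    rcases eq_or_ne z (y j₀) with rfl | hne
    · -- use exchange
      have hyy : y j₀ ≠ y j' := hyinj j₀ hj₀S j' (Finset.mem_of_mem_erase hj')
          (ne_of_lt (hj₀min j' hj'))
      have hx₀mem : x j₀ ∈ N.closure (insert (y j₀) ((I \ {y j₀}) \ {y j'}))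
          \ N.closure ((I \ {y j₀}) \ {y j'}) := by
        constructor
        · have heq2 : insert (y j₀) ((I \ {y j₀}) \ {y j'}) = I \ {y j'} := by
            rw [diff_diff_comm, insert_diff_singleton, insert_eq_of_mem hz]
          rw [heq2]
          exact h3 j₀ hj₀S j' (Finset.mem_of_mem_erase hj') (hj₀min j' hj')
        · exact fun h => h1 j₀ hj₀S (N.closure_subset_closure diff_subset h)
      have hex := (Matroid.closure_exchange hx₀mem).1
      rwa [← hsub1 j' hj'] at hex
    · refine N.subset_closure _ hIsubg ?_
      rw [hsub1 j' hj']
      exact mem_insert_of_mem _ ⟨⟨hz.1, hne⟩, hz.2⟩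
  -- apply induction hypothesis to I'
  have hres := ih S' hS'lt hI'i
    (fun j hj => mem_insert_of_mem _ ⟨hy j (Finset.mem_of_mem_erase hj),
        hyinj j (Finset.mem_of_mem_erase hj) j₀ hj₀S (Finset.ne_of_mem_erase hj)⟩)
    (fun j hj hmem => by
      rcases mem_insert_iff.1 hmem with h | h
      · exact hxinj j (Finset.mem_of_mem_erase hj) j₀ hj₀S (Finset.ne_of_mem_erase hj) h
      · exact hx j (Finset.mem_of_mem_erase hj) h.1)
    (fun j hj => hxE j (Finset.mem_of_mem_erase hj))
    (fun j hj => hclI (hxcl j (Finset.mem_of_mem_erase hj)))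
    (fun j hj h => h1 j (Finset.mem_of_mem_erase hj) (hkey j hj h))
    (fun j hj j' hj' hlt => hkey2 j' hj'
      (h3 j (Finset.mem_of_mem_erase hj) j' (Finset.mem_of_mem_erase hj') hlt))
    (fun j hj j' hj' hne =>
      hxinj j (Finset.mem_of_mem_erase hj) j' (Finset.mem_of_mem_erase hj') hne)
    (fun j hj j' hj' hne =>
      hyinj j (Finset.mem_of_mem_erase hj) j' (Finset.mem_of_mem_erase hj') hne)
  have hSS' : (S : Set ℕ) = insert j₀ (S' : Set ℕ) := by
    rw [hS', Finset.coe_erase, insert_diff_singleton, insert_eq_of_mem (Finset.mem_coe.2 hj₀S)]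
  have heq : (x '' S') ∪ (I' \ (y '' S')) = (x '' S) ∪ (I \ (y '' S)) := by
    ext z
    simp only [hSS', image_insert_eq, hI'def, mem_union, mem_diff, mem_insert_iff]
    constructor
    · rintro (hz | ⟨rfl | ⟨hzI, hzy0⟩, hzS'⟩)
      · exact Or.inl (Or.inr hz)
      · exact Or.inl (Or.inl rfl)
      · refine Or.inr ⟨hzI, ?_⟩
        rintro (h | h)
        · exact hzy0 h
        · exact hzS' h
    · rintro ((rfl | hz) | ⟨hzI, hzy⟩)
      · exact Or.inr ⟨Or.inl rfl, fun h => by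
          obtain ⟨j, hj, hjeq⟩ := h
          exact hx j₀ hj₀S (hjeq ▸ hy j (Finset.mem_of_mem_erase hj))⟩
      · exact Or.inl hz
      · refine Or.inr ⟨Or.inr ⟨hzI, fun h => hzy (Or.inl h)⟩, fun h => hzy (Or.inr h)⟩
  rwa [heq] at hres


lemma ncard_iUnion_fin {β : Type*} {b : ℕ} (I : Fin b → Set β) (hfin : ∀ i, (I i).Finite)
    (hdj : ∀ i i', i ≠ i' → Disjoint (I i) (I i')) :
    (⋃ i, I i).ncard = ∑ i, (I i).ncard := by
  classical
  have h1 : (⋃ i, I i) = ↑(Finset.univ.biUnion fun i => (hfin i).toFinset) := by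
    ext z; simp [Set.Finite.mem_toFinset]
  rw [h1, Set.ncard_coe_finset, Finset.card_biUnion]
  · exact Finset.sum_congr rfl fun i _ => (Set.ncard_eq_toFinset_card _ (hfin i)).symm
  · intro i _ i' _ hne
    rw [Function.onFun, Finset.disjoint_left]
    intro z hz hz'
    rw [Set.Finite.mem_toFinset] at hz hz'
    exact (hdj i i' hne).le_bot ⟨hz, hz'⟩

/-- The key augmentation step. -/
lemma augment {b : ℕ} (hb : 0 < b) (N : Matroid α) (hE : N.E.Finite)
    (H : ∀ A ⊆ N.E, A.ncard ≤ b * matroidRank N A)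
    (I : Fin b → Set α) (hind : ∀ i, N.Indep (I i))
    (hdj : ∀ i i', i ≠ i' → Disjoint (I i) (I i'))
    (e : α) (he : e ∈ N.E) (heU : e ∉ ⋃ i, I i) :
    ∃ J : Fin b → Set α, (∀ i, N.Indep (J i)) ∧
      (∀ i i', i ≠ i' → Disjoint (J i) (J i')) ∧ (⋃ i, J i) = insert e (⋃ i, I i) := by
  classical
  set arcc : Fin b → α → α → Prop := fun i u v =>
    u ∈ N.E ∧ u ∉ I i ∧ v ∈ I i ∧ u ∈ N.closure (I i) ∧ u ∉ N.closure (I i \ {v})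
    with harcc
  set Fix : α → Prop := fun u => ∃ i, u ∈ N.E ∧ u ∉ N.closure (I i) with hFix
  set Ch : ℕ → (ℕ → α) → Prop :=
    fun n p => p 0 = e ∧ ∀ j, j < n → ∃ i, arcc i (p j) (p (j+1)) with hCh
  by_cases hcase : ∃ n, ∃ p, Ch n p ∧ Fix (p n)
  · -- Case A : an augmenting path exists
    set n₀ := Nat.find hcase with hn₀
    obtain ⟨p, hp, hfix⟩ := Nat.find_spec hcase
    have hmin : ∀ m, m < n₀ → ¬ ∃ q, Ch m q ∧ Fix (q m) := fun m hm => Nat.find_min hcase hm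
    -- splice tool
    have hsplice : ∀ j j', j < j' → j' ≤ n₀ →
        (j' < n₀ → ∃ i, arcc i (p j) (p (j'+1))) → (j' = n₀ → p j = p j') → False := by
      intro j j' hlt hle harcj heqj
      set d := j' - j with hd
      set m := n₀ - d with hm
      set q : ℕ → α := fun k => if k ≤ j then p k else p (k + d) with hq
      have hmlt : m < n₀ := by omega
      have hqm : q m = p n₀ := by
        rcases lt_or_ge j m with h | h
        · have : ¬ (m ≤ j) := by omega
          simp only [hq, this, if_false]
          congr 1; omega
        · have hmj : m = j := by omega
          have hj'n : j' = n₀ := by omega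
          simp only [hq, hmj, le_refl, if_true]
          rw [heqj hj'n, hj'n]
      refine hmin m hmlt ⟨q, ⟨?_, ?_⟩, ?_⟩
      · simp only [hq, Nat.zero_le, if_true]; exact hp.1
      · intro k hk
        rcases lt_trichotomy k j with h | rfl | h
        · have h1 : k ≤ j := le_of_lt h
          have h2 : k + 1 ≤ j := h
          simp only [hq, h1, h2, if_true]
          exact hp.2 k (by omega)
        · have hj'lt : j' < n₀ := by omega
          have h1 : ¬ (k + 1 ≤ k) := by omega
          simp only [hq, le_refl, if_true, h1, if_false]
          have : k + 1 + d = j' + 1 := by omega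
          rw [this]
          exact harcj hj'lt
        · have h1 : ¬ (k ≤ j) := by omega
          have h2 : ¬ (k + 1 ≤ j) := by omega
          simp only [hq, h1, h2, if_false]
          have : k + 1 + d = (k + d) + 1 := by omega
          rw [this]
          exact hp.2 (k + d) (by omega)
      · rw [hqm]; exact hfix
    -- distinctness of path vertices
    have hdist : ∀ j j', j < j' → j' ≤ n₀ → p j ≠ p j' := by
      intro j j' hlt hle heq
      refine hsplice j j' hlt hle (fun hj'n => ?_) (fun _ => heq)
      obtain ⟨i, hi⟩ := hp.2 j' hj'n
      exact ⟨i, heq ▸ hi⟩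
    -- choose indices
    have hchain' : ∀ j, ∃ i, j < n₀ → arcc i (p j) (p (j+1)) := by
      intro j
      by_cases hj : j < n₀
      · obtain ⟨i, hi⟩ := hp.2 j hj; exact ⟨i, fun _ => hi⟩
      · exact ⟨⟨0, hb⟩, fun h => absurd h hj⟩
    choose idx harc using hchain'
    obtain ⟨i₀, hi₀E, hi₀cl⟩ := hfix
    set S : Fin b → Finset ℕ := fun i => (Finset.range n₀).filter (fun j => idx j = i) with hS
    have hmemS : ∀ {i j}, j ∈ S i ↔ (j < n₀ ∧ idx j = i) := by
      intro i j; simp [hS]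
    set K : Fin b → Set α := fun i =>
      (p '' (S i)) ∪ (I i \ ((fun j => p (j+1)) '' (S i))) with hK
    set J : Fin b → Set α := fun i =>
      if i = i₀ then insert (p n₀) (K i) else K i with hJ
    -- arc facts
    have harcS : ∀ {i j}, j ∈ S i → arcc i (p j) (p (j+1)) := by
      intro i j hj
      rw [hmemS] at hj
      exact hj.2 ▸ harc j hj.1
    -- triangular condition
    have htri : ∀ i, ∀ j ∈ S i, ∀ j' ∈ S i, j < j' →
        p j ∈ N.closure (I i \ {p (j'+1)}) := by
      intro i j hj j' hj' hlt
      by_contra hcon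
      rw [hmemS] at hj hj'
      refine hsplice j j' hlt (le_of_lt hj'.1) (fun _ => ?_) (fun h => absurd h (by omega))
      obtain ⟨hE1, hI1, _, hcl1, _⟩ := harcS (hmemS.2 hj)
      obtain ⟨_, _, hI2, _, _⟩ := harcS (hmemS.2 hj')
      exact ⟨i, hE1, hI1, hI2, hcl1, hcon⟩
    -- independence of K i
    have hKind : ∀ i, N.Indep (K i) := by
      intro i
      refine tx (hind i) (S i) p (fun j => p (j+1))
        (fun j hj => (harcS hj).2.2.1)
        (fun j hj => (harcS hj).2.1)
        (fun j hj => (harcS hj).1)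
        (fun j hj => (harcS hj).2.2.2.1)
        (fun j hj => (harcS hj).2.2.2.2)
        (fun j hj j' hj' hlt => htri i j hj j' hj' hlt)
        (fun j hj j' hj' hne => ?_) (fun j hj j' hj' hne => ?_)
      · rw [hmemS] at hj hj'
        rcases lt_or_gt_of_ne hne with h | h
        · exact hdist j j' h (le_of_lt hj'.1)
        · exact (hdist j' j h (le_of_lt hj.1)).symm
      · rw [hmemS] at hj hj'
        rcases lt_or_gt_of_ne hne with h | h
        · exact hdist (j+1) (j'+1) (by omega) hj'.1
        · exact (hdist (j'+1) (j+1) (by omega) hj.1).symm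
    have hKcl : ∀ i, K i ⊆ N.closure (I i) := by
      intro i z hz
      rcases hz with ⟨j, hj, rfl⟩ | hz
      · exact (harcS (by exact_mod_cast hj)).2.2.2.1
      · exact N.subset_closure _ (hind i).subset_ground hz.1
    have hJind : ∀ i, N.Indep (J i) := by
      intro i
      by_cases hii : i = i₀
      · simp only [hJ, hii, if_true]
        have hKcl' : N.closure (K i₀) ⊆ N.closure (I i₀) :=
          N.closure_subset_closure_of_subset_closure (hKcl i₀)
        have hpK : p n₀ ∉ K i₀ := fun h =>
          hi₀cl (N.subset_closure _ (hKind i₀).subset_ground h |> hKcl')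
        rw [(hKind i₀).insert_indep_iff_of_notMem hpK]
        exact ⟨hi₀E, fun h => hi₀cl (hKcl' h)⟩
      · simp only [hJ, hii, if_false]
        exact hKind i
    -- membership characterizations
    have hmemK : ∀ {i z}, z ∈ K i ↔
        (∃ j, j ∈ S i ∧ p j = z) ∨ (z ∈ I i ∧ ∀ j ∈ S i, p (j+1) ≠ z) := by
      intro i z
      simp only [hK, Set.mem_union, Set.mem_image, Set.mem_diff, Finset.mem_coe]
      constructor
      · rintro (⟨j, hj, rfl⟩ | ⟨hz, hz2⟩)
        · exact Or.inl ⟨j, hj, rfl⟩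
        · exact Or.inr ⟨hz, fun j hj hje => hz2 ⟨j, hj, hje⟩⟩
      · rintro (⟨j, hj, rfl⟩ | ⟨hz, hz2⟩)
        · exact Or.inl ⟨j, hj, rfl⟩
        · exact Or.inr ⟨hz, fun ⟨j, hj, hje⟩ => hz2 j hj hje⟩
    -- home of path vertices
    have hhome : ∀ j, j < n₀ → p (j+1) ∈ I (idx j) := fun j hj => (harc j hj).2.2.1
    have hnotmem : ∀ j, j ≤ n₀ → ∀ i, p j ∈ I i → ∃ k, k + 1 = j ∧ k < n₀ ∧ idx k = i := by
      intro j hj i hmem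
      rcases Nat.eq_zero_or_pos j with rfl | hpos
      · exact absurd (Set.mem_iUnion.2 ⟨i, hp.1 ▸ hmem⟩) heU
      · obtain ⟨k, rfl⟩ : ∃ k, j = k + 1 := ⟨j - 1, by omega⟩
        have hk : k < n₀ := by omega
        refine ⟨k, rfl, hk, ?_⟩
        by_contra hne
        exact (hdj (idx k) i hne).le_bot ⟨hhome k hk, hmem⟩
    -- disjointness of the new family
    have hmemJ : ∀ {i z}, z ∈ J i ↔ (i = i₀ ∧ z = p n₀) ∨ z ∈ K i := by
      intro i z
      by_cases hii : i = i₀ <;>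
        simp only [hJ, hii, if_true, if_false, Set.mem_insert_iff, true_and, false_and,
          false_or] <;> tauto
    have hJdj : ∀ i i', i ≠ i' → Disjoint (J i) (J i') := by
      intro i i' hne
      rw [Set.disjoint_left]
      intro z hzi hzi'
      rw [hmemJ] at hzi hzi'
      -- helper : z = p n₀ in one and z ∈ K i' in other is impossible, and K ∩ K impossible
      have hKK : ∀ i i', i ≠ i' → z ∈ K i → z ∈ K i' → False := by
        intro i i' hne hzi hzi'
        rw [hmemK] at hzi hzi'
        rcases hzi with ⟨j, hj, rfl⟩ | ⟨hzI, hzrem⟩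
        · rcases hzi' with ⟨j', hj', hje⟩ | ⟨hzI', hzrem'⟩
          · -- p j = p j' in different filters
            have : j = j' := by
              by_contra hjj
              rw [hmemS] at hj hj'
              rcases lt_or_gt_of_ne hjj with h | h
              · exact hdist j j' h (le_of_lt hj'.1) hje.symm
              · exact hdist j' j h (le_of_lt hj.1) hje
            rw [hmemS] at hj hj'
            exact hne (hj.2 ▸ this ▸ hj'.2)
          · -- p j ∈ I i' minus removed
            have hjn : j < n₀ ∧ idx j = i := hmemS.1 hj
            obtain ⟨k, hk1, hk2, hk3⟩ := hnotmem j (le_of_lt hjn.1) i' hzI'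
            exact hzrem' k (hmemS.2 ⟨hk2, hk3⟩) (by rw [hk1])
        · rcases hzi' with ⟨j', hj', hje⟩ | ⟨hzI', hzrem'⟩
          · have hjn : j' < n₀ ∧ idx j' = i' := hmemS.1 hj'
            obtain ⟨k, hk1, hk2, hk3⟩ := hnotmem j' (le_of_lt hjn.1) i (hje ▸ hzI)
            exact hzrem k (hmemS.2 ⟨hk2, hk3⟩) (by rw [hk1, hje])
          · exact (hdj i i' hne).le_bot ⟨hzI, hzI'⟩
      -- z = p n₀ in J i impossible together with z ∈ K i'
      have hn₀K : ∀ i, p n₀ ∈ K i → False := by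
        intro i hmem
        rw [hmemK] at hmem
        rcases hmem with ⟨j, hj, hje⟩ | ⟨hzI, hzrem⟩
        · have hjn := hmemS.1 hj
          exact hdist j n₀ hjn.1 le_rfl hje
        · rcases Nat.eq_zero_or_pos n₀ with h0 | hpos
          · exact heU (Set.mem_iUnion.2 ⟨i, (h0 ▸ hp.1 : p n₀ = e) ▸ hzI⟩)
          · obtain ⟨k, hk1, hk2, hk3⟩ := hnotmem n₀ le_rfl i hzI
            exact hzrem k (hmemS.2 ⟨hk2, hk3⟩) (by rw [hk1])
      rcases hzi with ⟨hii, rfl⟩ | hzi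
      · rcases hzi' with ⟨hii', _⟩ | hzi'
        · exact hne (hii.trans hii'.symm)
        · exact hn₀K i' hzi'
      · rcases hzi' with ⟨hii', rfl⟩ | hzi'
        · exact hn₀K i hzi
        · exact hKK i i' hne hzi hzi'
    -- union of the new family
    have hJun : (⋃ i, J i) = insert e (⋃ i, I i) := by
      ext z
      simp only [Set.mem_iUnion, Set.mem_insert_iff]
      constructor
      · rintro ⟨i, hzi⟩
        rw [hmemJ] at hzi
        have hpmem : ∀ j, j ≤ n₀ → p j = e ∨ ∃ i, p j ∈ I i := by
          intro j hj
          rcases Nat.eq_zero_or_pos j with rfl | hpos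
          · exact Or.inl hp.1
          · obtain ⟨k, rfl⟩ : ∃ k, j = k + 1 := ⟨j - 1, by omega⟩
            exact Or.inr ⟨idx k, hhome k (by omega)⟩
        rcases hzi with ⟨_, rfl⟩ | hzi
        · rcases hpmem n₀ le_rfl with h | ⟨i', h⟩
          · exact Or.inl h
          · exact Or.inr ⟨i', h⟩
        · rw [hmemK] at hzi
          rcases hzi with ⟨j, hj, rfl⟩ | ⟨hzI, _⟩
          · exact hpmem j (le_of_lt (hmemS.1 hj).1)
          · exact Or.inr ⟨i, hzI⟩
      · rintro (rfl | ⟨i, hzi⟩)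
        · -- e = p 0 is in the union
          rcases Nat.eq_zero_or_pos n₀ with h0 | hpos
          · exact ⟨i₀, hmemJ.2 (Or.inl ⟨rfl, (h0 ▸ hp.1).symm⟩)⟩
          · refine ⟨idx 0, hmemJ.2 (Or.inr (hmemK.2 (Or.inl ⟨0, hmemS.2 ⟨hpos, rfl⟩, hp.1⟩)))⟩
        · -- z ∈ I i
          by_cases hrem : ∀ j ∈ S i, p (j+1) ≠ z
          · exact ⟨i, hmemJ.2 (Or.inr (hmemK.2 (Or.inr ⟨hzi, hrem⟩)))⟩
          · push_neg at hrem
            obtain ⟨j, hj, hje⟩ := hrem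
            have hjn := hmemS.1 hj
            rcases eq_or_lt_of_le (Nat.succ_le_of_lt hjn.1) with hj1 | hj1
            · exact ⟨i₀, hmemJ.2 (Or.inl ⟨rfl, by rw [← hje]; exact congrArg p (by omega : j + 1 = n₀)⟩)⟩
            · exact ⟨idx (j+1), hmemJ.2 (Or.inr (hmemK.2
                (Or.inl ⟨j+1, hmemS.2 ⟨hj1, rfl⟩, hje⟩)))⟩
    exact ⟨J, hJind, hJdj, hJun⟩
  · -- Case B : no augmenting path exists; derive a contradiction
    exfalso
    set R : Set α := {x | ∃ n p, Ch n p ∧ p n = x} with hR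
    have heR : e ∈ R := ⟨0, fun _ => e, ⟨rfl, fun j hj => absurd hj (by omega)⟩, rfl⟩
    have hRsub : R ⊆ insert e (⋃ i, I i) := by
      rintro x ⟨n, p, hp, rfl⟩
      rcases Nat.eq_zero_or_pos n with rfl | hpos
      · exact hp.1 ▸ Set.mem_insert _ _
      · obtain ⟨k, rfl⟩ : ∃ k, n = k + 1 := ⟨n - 1, by omega⟩
        obtain ⟨i, hi⟩ := hp.2 k (by omega)
        exact Set.mem_insert_of_mem _ (Set.mem_iUnion.2 ⟨i, hi.2.2.1⟩)
    have hRE : R ⊆ N.E := by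
      refine hRsub.trans (Set.insert_subset he ?_)
      exact Set.iUnion_subset fun i => (hind i).subset_ground
    have hRfin : R.Finite := hE.subset hRE
    have hnofix : ∀ x ∈ R, ∀ i, x ∈ N.closure (I i) := by
      rintro x hxR i
      by_contra hcl
      obtain ⟨n, p, hp, rfl⟩ := hxR
      exact hcase ⟨n, p, hp, ⟨i, hRE ⟨n, p, hp, rfl⟩, hcl⟩⟩
    have hext : ∀ x ∈ R, ∀ y i, arcc i x y → y ∈ R := by
      rintro x ⟨n, p, hp, rfl⟩ y i harcxy
      refine ⟨n + 1, fun k => if k ≤ n then p k else y, ⟨?_, ?_⟩, ?_⟩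
      · simp only [Nat.zero_le, if_true]; exact hp.1
      · intro j hj
        rcases lt_or_ge j n with h | h
        · have h1 : j ≤ n := le_of_lt h
          have h2 : j + 1 ≤ n := h
          simp only [h1, h2, if_true]
          exact hp.2 j h
        · have hjn : j = n := by omega
          subst hjn
          have h2 : ¬ (j + 1 ≤ j) := by omega
          simp only [le_refl, if_true, h2, if_false]
          exact ⟨i, harcxy⟩
      · simp
    have hclR : ∀ x ∈ R, ∀ i, x ∈ N.closure (I i ∩ R) := by
      intro x hxR i
      by_cases hxI : x ∈ I i
      · exact N.mem_closure_of_mem ⟨hxI, hxR⟩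
          ((Set.inter_subset_left).trans (hind i).subset_ground)
      · set D : Set α := {y | y ∈ I i ∧ x ∉ N.closure (I i \ {y})} with hD
        have hDR : D ⊆ R := by
          intro y hy
          exact hext x hxR y i ⟨hRE hxR, hxI, hy.1, hnofix x hxR i, hy.2⟩
        have hDI : D ⊆ I i := fun y hy => hy.1
        have hxD : x ∈ N.closure D := by
          set K : Set α := I i \ D with hKK
          rcases Set.eq_empty_or_nonempty K with hKe | hKne
          · have : I i = D := by
              apply Set.Subset.antisymm _ hDI
              intro y hy
              by_contra hyD
              exact (Set.eq_empty_iff_forall_notMem.1 hKe y) ⟨hy, hyD⟩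
            exact this ▸ hnofix x hxR i
          · have hsInter : ⋂₀ ((fun y => I i \ {y}) '' K) = D := by
              ext z
              simp only [Set.mem_sInter, Set.mem_image, forall_exists_index, and_imp]
              constructor
              · intro hz
                obtain ⟨y₀, hy₀⟩ := hKne
                have hzI : z ∈ I i := by
                  have := hz _ y₀ hy₀ rfl
                  exact this.1
                refine ⟨hzI, ?_⟩
                by_contra hzcl
                have hzK : z ∈ K := ⟨hzI, fun h => h.2 hzcl⟩
                exact (hz _ z hzK rfl).2 rfl
              · rintro ⟨hzI, hzcl⟩ J y hyK rfl
                refine ⟨hzI, fun hzy => ?_⟩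
                rw [Set.mem_singleton_iff] at hzy
                subst hzy
                exact hyK.2 ⟨hyK.1, hzcl⟩
            have hcleq := (hind i).closure_sInter_eq_biInter_closure_of_forall_subset
              (Js := (fun y => I i \ {y}) '' K) (Set.Nonempty.image _ hKne)
              (fun J hJ => by obtain ⟨y, -, rfl⟩ := hJ; exact Set.diff_subset)
            rw [hsInter] at hcleq
            rw [hcleq]
            simp only [Set.mem_iInter, Set.mem_image, forall_exists_index, and_imp]
            rintro J y hyK rfl
            by_contra hcon
            exact hyK.2 ⟨hyK.1, hcon⟩
        exact N.closure_subset_closure (show D ⊆ I i ∩ R from fun y hy => ⟨hDI hy, hDR hy⟩) hxD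
    -- rank bound and the contradiction
    have hrank : ∀ i, matroidRank N R ≤ (I i ∩ R).ncard := by
      intro i
      refine matroidRank_le fun Jd hJd hJdR => ?_
      refine ncard_le_of_subset_closure hJd ((hind i).subset Set.inter_subset_left)
        (hRfin.subset Set.inter_subset_right) ?_
      exact fun z hz => hclR z (hJdR hz) i
    have hsum : ∑ i : Fin b, (I i ∩ R).ncard = ((⋃ i, I i) ∩ R).ncard := by
      rw [Set.iUnion_inter]
      exact (ncard_iUnion_fin _ (fun i => hRfin.subset Set.inter_subset_right)
        (fun i i' hne => ((hdj i i' hne).mono Set.inter_subset_left Set.inter_subset_left))).symm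
    have hUR : ((⋃ i, I i) ∩ R).ncard ≤ R.ncard - 1 := by
      have hsub : (⋃ i, I i) ∩ R ⊆ R \ {e} := by
        rintro z ⟨hz1, hz2⟩
        exact ⟨hz2, fun h => heU (Set.mem_singleton_iff.1 h ▸ hz1)⟩
      calc ((⋃ i, I i) ∩ R).ncard ≤ (R \ {e}).ncard :=
            Set.ncard_le_ncard hsub (hRfin.subset Set.diff_subset)
        _ = R.ncard - 1 := Set.ncard_diff_singleton_of_mem heR
    have hcard : 1 ≤ R.ncard := (Set.ncard_pos hRfin).2 ⟨e, heR⟩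
    have hmain : R.ncard ≤ R.ncard - 1 := by
      calc R.ncard ≤ b * matroidRank N R := H R hRE
        _ = ∑ _i : Fin b, matroidRank N R := by
              rw [Finset.sum_const, Finset.card_univ, Fintype.card_fin, smul_eq_mul]
        _ ≤ ∑ i : Fin b, (I i ∩ R).ncard := Finset.sum_le_sum fun i _ => hrank i
        _ = ((⋃ i, I i) ∩ R).ncard := hsum
        _ ≤ R.ncard - 1 := hUR
    omega

/-- Matroid base covering theorem: under Edmonds' condition the ground set partitions
into `b` independent sets. -/
lemma cover {b : ℕ} (hb : 0 < b) (N : Matroid α) (hE : N.E.Finite)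
    (H : ∀ A ⊆ N.E, A.ncard ≤ b * matroidRank N A) :
    ∃ J : Fin b → Set α, (∀ i, N.Indep (J i)) ∧
      (∀ i i', i ≠ i' → Disjoint (J i) (J i')) ∧ (⋃ i, J i) = N.E := by
  suffices h : ∀ n (I : Fin b → Set α), (∀ i, N.Indep (I i)) →
      (∀ i i', i ≠ i' → Disjoint (I i) (I i')) → (N.E \ ⋃ i, I i).ncard = n →
      ∃ J : Fin b → Set α, (∀ i, N.Indep (J i)) ∧
        (∀ i i', i ≠ i' → Disjoint (J i) (J i')) ∧ (⋃ i, J i) = N.E by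
    exact h _ (fun _ => ∅) (fun _ => N.empty_indep)
      (fun _ _ _ => disjoint_bot_left) rfl
  intro n
  induction n using Nat.strong_induction_on with
  | _ n ih =>
  intro I hind hdj hn
  rcases Set.eq_empty_or_nonempty (N.E \ ⋃ i, I i) with hem | ⟨e, he⟩
  · refine ⟨I, hind, hdj, ?_⟩
    have h1 : ⋃ i, I i ⊆ N.E := Set.iUnion_subset fun i => (hind i).subset_ground
    exact h1.antisymm (Set.diff_eq_empty.1 hem)
  · obtain ⟨J, hJ1, hJ2, hJ3⟩ := augment hb N hE H I hind hdj e he.1 he.2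
    have hdiff : N.E \ ⋃ i, J i = (N.E \ ⋃ i, I i) \ {e} := by
      rw [hJ3]
      ext z
      simp only [Set.mem_diff, Set.mem_insert_iff, Set.mem_singleton_iff]
      tauto
    have hlt : (N.E \ ⋃ i, J i).ncard < n := by
      rw [hdiff, Set.ncard_diff_singleton_of_mem he, hn]
      have : 0 < n := hn ▸ (Set.ncard_pos (hE.subset Set.diff_subset)).2 ⟨e, he⟩
      omega
    exact ih _ hlt J hJ1 hJ2 rfl

lemma ncard_prod {β γ : Type*} (s : Set β) (t : Set γ) :
    (s ×ˢ t).ncard = s.ncard * t.ncard := by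
  rw [← Nat.card_coe_set_eq, ← Nat.card_coe_set_eq, ← Nat.card_coe_set_eq,
    ← Nat.card_prod]
  exact Nat.card_congr (Equiv.Set.prod s t)

end EdmondsAux

open EdmondsAux

/-- **Edmonds' formula, fractional form.** A matroid `M` on a finite ground set `E`
admits an `a`-covering of `E` by `b` independent sets iff `b · r(A) ≥ a · |A|` for
every `A ⊆ E`. -/
theorem aCovering_iff_rank {α : Type*} (M : Matroid α) (hE : M.E.Finite)
    (a b : ℕ) (ha : 0 < a) (hb : 0 < b) :
    (∃ V : Fin b → Set α, (∀ i, M.Indep (V i)) ∧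
        ∀ e ∈ M.E, {i : Fin b | e ∈ V i}.ncard = a) ↔
      ∀ A ⊆ M.E, a * A.ncard ≤ b * matroidRank M A := by
  classical
  constructor
  · rintro ⟨V, hVind, hVcov⟩ A hA
    have hAfin : A.Finite := hE.subset hA
    set T := hAfin.toFinset with hT
    have h1 : ∀ i : Fin b, (V i ∩ A).ncard ≤ matroidRank M A := fun i =>
      le_matroidRank hAfin ((hVind i).subset Set.inter_subset_left) Set.inter_subset_right
    have h2 : ∀ i : Fin b, (V i ∩ A).ncard = (T.filter (· ∈ V i)).card := by
      intro i
      have : V i ∩ A = ↑(T.filter (· ∈ V i)) := by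
        ext z
        simp only [Set.mem_inter_iff, Finset.coe_filter, Set.mem_setOf_eq, hT,
          Set.Finite.mem_toFinset]
        tauto
      rw [this, Set.ncard_coe_finset]
    have h3 : ∀ z ∈ T, (Finset.univ.filter (fun i : Fin b => z ∈ V i)).card = a := by
      intro z hz
      have hzA : z ∈ A := (Set.Finite.mem_toFinset _).1 hz
      have := hVcov z (hA hzA)
      rwa [show {i : Fin b | z ∈ V i} = ↑(Finset.univ.filter (fun i : Fin b => z ∈ V i)) by
        ext i; simp, Set.ncard_coe_finset] at this
    have hdouble : ∑ i : Fin b, (T.filter (· ∈ V i)).card = a * A.ncard := by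
      have hAT : A.ncard = T.card := Set.ncard_eq_toFinset_card _ hAfin
      calc ∑ i : Fin b, (T.filter (· ∈ V i)).card
          = ∑ i : Fin b, ∑ z ∈ T, if z ∈ V i then 1 else 0 :=
            Finset.sum_congr rfl fun i _ => Finset.card_filter _ _
        _ = ∑ z ∈ T, ∑ i : Fin b, if z ∈ V i then 1 else 0 := Finset.sum_comm
        _ = ∑ _z ∈ T, a := Finset.sum_congr rfl (fun z hz => by
            rw [← Finset.card_filter]; exact h3 z hz)
        _ = a * A.ncard := by rw [Finset.sum_const, smul_eq_mul, hAT, mul_comm]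
    calc a * A.ncard = ∑ i : Fin b, (T.filter (· ∈ V i)).card := hdouble.symm
      _ = ∑ i : Fin b, (V i ∩ A).ncard := by
          exact Finset.sum_congr rfl fun i _ => (h2 i).symm
      _ ≤ ∑ _i : Fin b, matroidRank M A := Finset.sum_le_sum fun i _ => h1 i
      _ = b * matroidRank M A := by
          rw [Finset.sum_const, Finset.card_univ, Fintype.card_fin, smul_eq_mul]
  · intro H
    set f : α × Fin a → α := Prod.fst with hf
    set N := M.comap f with hN
    have hNE : N.E = M.E ×ˢ (Set.univ : Set (Fin a)) := by
      rw [hN, Matroid.comap_ground_eq]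
      ext z
      simp [hf]
    have hNfin : N.E.Finite := by
      rw [hNE]; exact hE.prod Set.finite_univ
    have HN : ∀ A ⊆ N.E, A.ncard ≤ b * matroidRank N A := by
      intro A hA
      have hAfin : A.Finite := hNfin.subset hA
      have himgE : f '' A ⊆ M.E := by
        rintro x ⟨z, hz, rfl⟩
        exact (hNE ▸ hA hz).1
      have himgfin : (f '' A).Finite := hE.subset himgE
      -- step 1 : |A| ≤ a * |f '' A|
      have hstep1 : A.ncard ≤ (f '' A).ncard * a := by
        have hsub : A ⊆ (f '' A) ×ˢ (Set.univ : Set (Fin a)) := by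
          intro z hz
          exact ⟨Set.mem_image_of_mem f hz, Set.mem_univ _⟩
        calc A.ncard ≤ ((f '' A) ×ˢ (Set.univ : Set (Fin a))).ncard :=
              Set.ncard_le_ncard hsub (himgfin.prod Set.finite_univ)
          _ = (f '' A).ncard * a := by
              rw [EdmondsAux.ncard_prod, Set.ncard_univ, Nat.card_eq_fintype_card, Fintype.card_fin]
      -- step 2 : rank of image at most rank of A in the comap
      obtain ⟨I0, hI0ind, hI0sub, hI0card⟩ := exists_indep_rank (N := M) himgfin
      have hstep2 : matroidRank M (f '' A) ≤ matroidRank N A := by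
        have hsel : ∀ x : I0, ∃ z, z ∈ A ∧ f z = ↑x := by
          rintro ⟨x, hx⟩
          obtain ⟨z, hz, hze⟩ := hI0sub hx
          exact ⟨z, hz, hze⟩
        choose g hg1 hg2 using hsel
        have hginj : Function.Injective g := by
          intro u u' huu
          have : f (g u) = f (g u') := by rw [huu]
          rw [hg2, hg2] at this
          exact Subtype.ext this
        have hfrange : f '' Set.range g = I0 := by
          rw [← Set.image_univ, Set.image_image]
          simp only [hg2]
          rw [Set.image_univ, Subtype.range_coe]
        have hIind : N.Indep (Set.range g) := by
          rw [hN, Matroid.comap_indep_iff]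
          refine ⟨by rw [hfrange]; exact hI0ind, ?_⟩
          rintro z ⟨u, rfl⟩ z' ⟨u', rfl⟩ hzz
          have hval : (↑u : α) = ↑u' := (hg2 u).symm.trans (hzz.trans (hg2 u'))
          exact congrArg g (Subtype.ext hval)
        have hcard : I0.ncard = (Set.range g).ncard := by
          rw [← Set.image_univ, Set.ncard_image_of_injective _ hginj, Set.ncard_univ,
            Nat.card_coe_set_eq]
        have hrsub : Set.range g ⊆ A := by
          rintro z ⟨u, rfl⟩
          exact hg1 u
        rw [← hI0card, hcard]
        exact le_matroidRank hAfin hIind hrsub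
      calc A.ncard ≤ (f '' A).ncard * a := hstep1
        _ = a * (f '' A).ncard := mul_comm _ _
        _ ≤ b * matroidRank M (f '' A) := H _ himgE
        _ ≤ b * matroidRank N A := Nat.mul_le_mul_left _ hstep2
    obtain ⟨W, hW1, hW2, hW3⟩ := cover hb N hNfin HN
    refine ⟨fun i => f '' (W i), fun i => ((Matroid.comap_indep_iff).1 (hW1 i)).1, ?_⟩
    intro e heE
    have hmemW : ∀ j : Fin a, ∃ i, (e, j) ∈ W i := by
      intro j
      have : ((e, j) : α × Fin a) ∈ N.E := by rw [hNE]; exact ⟨heE, Set.mem_univ _⟩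
      rw [← hW3] at this
      exact Set.mem_iUnion.1 this
    choose φ hφ using hmemW
    have huniq : ∀ j i, (e, j) ∈ W i → i = φ j := by
      intro j i hi
      by_contra hne
      exact (hW2 i (φ j) hne).le_bot ⟨hi, hφ j⟩
    have hrange : {i : Fin b | e ∈ f '' (W i)} = Set.range φ := by
      ext i
      simp only [Set.mem_setOf_eq, Set.mem_range]
      constructor
      · rintro ⟨z, hz, hze⟩
        refine ⟨z.2, ?_⟩
        have : ((e, z.2) : α × Fin a) = z := by
          rw [← hze]
        exact (huniq z.2 i (this ▸ hz)).symm
      · rintro ⟨j, rfl⟩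
        exact ⟨(e, j), hφ j, rfl⟩
    have hφinj : Function.Injective φ := by
      intro j j' hjj
      have h1 : ((e, j) : α × Fin a) ∈ W (φ j) := hφ j
      have h2 : ((e, j') : α × Fin a) ∈ W (φ j) := hjj ▸ hφ j'
      have hinjOn := ((Matroid.comap_indep_iff).1 (hW1 (φ j))).2
      have : ((e, j) : α × Fin a) = (e, j') := hinjOn h1 h2 rfl
      exact congrArg Prod.snd this
    rw [hrange, ← Set.image_univ, Set.ncard_image_of_injective _ hφinj, Set.ncard_univ,
      Nat.card_eq_fintype_card, Fintype.card_fin]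
end

section
/- Let M be a matroid on a finite ground set E whose ground set can be partitioned into k independent sets. Then for every list assignment L on E with |L(e)| = 2k for all e ∈ E, one can choose for each e ∈ E a subset L'(e) ⊆ L(e) with |L'(e)| = 2 such that for every color i ∈ ℕ, the set {e ∈ E : i ∈ L'(e)} is independent in M. -/
open Set

noncomputable def mrk {β : Type*} (N : Matroid β) (X : Set β) : ℕ :=
  (N.exists_isBasis' X).choose.ncard

section rk
variable {β : Type*} {N : Matroid β} {X Y I J : Set β}

lemma mrk_eq_of_basis' (hJ : N.IsBasis' J X) : mrk N X = J.ncard := by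
  have h := (N.exists_isBasis' X).choose_spec
  have := h.encard_eq_encard hJ
  rw [mrk, Set.ncard_def, Set.ncard_def, this]

lemma indep_ncard_le_mrk (hX : X.Finite) (hI : N.Indep I) (hIX : I ⊆ X) :
    I.ncard ≤ mrk N X := by
  obtain ⟨J, hJ, hIJ⟩ := hI.subset_isBasis'_of_subset hIX
  rw [mrk_eq_of_basis' hJ]
  exact Set.ncard_le_ncard hIJ (hX.subset hJ.subset)

lemma mrk_le_ncard (hX : X.Finite) : mrk N X ≤ X.ncard := by
  have h := (N.exists_isBasis' X).choose_spec
  rw [mrk_eq_of_basis' h]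
  exact Set.ncard_le_ncard h.subset hX

lemma mrk_mono (hY : Y.Finite) (hXY : X ⊆ Y) : mrk N X ≤ mrk N Y := by
  have h := (N.exists_isBasis' X).choose_spec
  rw [mrk_eq_of_basis' h]
  exact indep_ncard_le_mrk hY h.indep (h.subset.trans hXY)

lemma indep_of_ncard_le_mrk (hX : X.Finite) (h : X.ncard ≤ mrk N X) : N.Indep X := by
  have hJ := (N.exists_isBasis' X).choose_spec
  rw [mrk_eq_of_basis' hJ] at h
  have : (N.exists_isBasis' X).choose = X :=
    Set.eq_of_subset_of_ncard_le hJ.subset h hX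
  rw [← this]; exact hJ.indep

lemma mrk_submod (hX : X.Finite) (hY : Y.Finite) :
    mrk N (X ∪ Y) + mrk N (X ∩ Y) ≤ mrk N X + mrk N Y := by
  obtain ⟨I, hI⟩ := N.exists_isBasis' (X ∩ Y)
  obtain ⟨J, hJ, hIJ⟩ := hI.indep.subset_isBasis'_of_subset
    (hI.subset.trans (Set.inter_subset_left.trans Set.subset_union_left))
  have hJfin : J.Finite := (hX.union hY).subset hJ.subset
  have hu : (J ∩ X) ∪ (J ∩ Y) = J := by
    rw [← Set.inter_union_distrib_left, Set.inter_eq_left.mpr hJ.subset]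
  have hi : (J ∩ X) ∩ (J ∩ Y) = I := by
    have h1 : (J ∩ X) ∩ (J ∩ Y) = J ∩ (X ∩ Y) := by
      ext x; simp only [Set.mem_inter_iff]; tauto
    rw [h1]
    exact (hI.eq_of_subset_indep (hJ.indep.subset Set.inter_subset_left)
      (Set.subset_inter hIJ hI.subset) Set.inter_subset_right).symm
  have hX' : (J ∩ X).ncard ≤ mrk N X :=
    indep_ncard_le_mrk hX (hJ.indep.subset Set.inter_subset_left) Set.inter_subset_right
  have hY' : (J ∩ Y).ncard ≤ mrk N Y :=
    indep_ncard_le_mrk hY (hJ.indep.subset Set.inter_subset_left) Set.inter_subset_right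
  have hcard := Set.ncard_union_add_ncard_inter (J ∩ X) (J ∩ Y)
    (hJfin.subset Set.inter_subset_left) (hJfin.subset Set.inter_subset_left)
  rw [hu, hi] at hcard
  rw [mrk_eq_of_basis' hJ, mrk_eq_of_basis' hI]
  omega

end rk

/-- Rado's theorem on independent transversals, for finite systems. -/
theorem rado_thm {β ι : Type*} [Fintype ι] (N : Matroid β) :
    ∀ n (A : ι → Set β), (∀ i, (A i).Finite) → (∑ i, (A i).ncard) = n →
    (∀ S : Finset ι, S.card ≤ mrk N (⋃ i ∈ S, A i)) →
    ∃ f : ι → β, Function.Injective f ∧ (∀ i, f i ∈ A i) ∧ N.Indep (Set.range f) := by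
  intro n
  induction n using Nat.strong_induction_on with
  | _ n IH =>
  intro A hfin hsum hcond
  classical
  have hpos : ∀ i, 1 ≤ (A i).ncard := by
    intro i
    have h := hcond {i}
    simp only [Finset.card_singleton, Finset.mem_singleton, Set.iUnion_iUnion_eq_left] at h
    exact h.trans (mrk_le_ncard (hfin i))
  by_cases hall : ∀ i, (A i).ncard = 1
  · choose a ha using fun i => (Set.ncard_eq_one.mp (hall i))
    have hmem : ∀ i, a i ∈ A i := fun i => by rw [ha i]; exact rfl
    have hrange : Set.range a = ⋃ i ∈ (Finset.univ : Finset ι), A i := by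
      ext p
      simp only [Set.mem_range, Set.mem_iUnion, Finset.mem_univ, exists_true_left, ha,
        Set.mem_singleton_iff, true_and, exists_prop]
      exact ⟨fun ⟨i, h⟩ => ⟨i, h.symm⟩, fun ⟨i, h⟩ => ⟨i, h.symm⟩⟩
    refine ⟨a, ?_, hmem, ?_⟩
    · intro i j hij
      by_contra hne
      have h2 := hcond {i, j}
      have hc : ({i, j} : Finset ι).card = 2 := Finset.card_pair hne
      have hU : ⋃ x ∈ ({i, j} : Finset ι), A x = {a i} := by
        ext p
        simp only [Finset.mem_insert, Finset.mem_singleton, Set.mem_iUnion, exists_prop,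
          Set.mem_singleton_iff]
        constructor
        · rintro ⟨w, hw | hw, hp⟩
          · rw [hw] at hp; rw [ha i] at hp; exact hp
          · rw [hw] at hp; rw [ha j] at hp
            rw [Set.mem_singleton_iff] at hp
            rw [hp, hij]
        · rintro rfl; exact ⟨i, Or.inl rfl, hmem i⟩
      rw [hU, hc] at h2
      have := mrk_le_ncard (N := N) (X := ({a i} : Set β)) (Set.finite_singleton _)
      simp [Set.ncard_singleton] at this
      omega
    · apply indep_of_ncard_le_mrk
      · rw [hrange]
        exact Set.Finite.biUnion (Finset.univ : Finset ι).finite_toSet (fun i _ => hfin i)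
      · have h1 := hcond Finset.univ
        rw [← hrange] at h1
        refine le_trans ?_ h1
        have : Set.range a = ↑(Finset.univ.image a) := by simp
        rw [this, Set.ncard_coe_finset]
        exact Finset.card_image_le
  · push_neg at hall
    obtain ⟨i₀, hi₀⟩ := hall
    have h2 : 1 < (A i₀).ncard := by have := hpos i₀; omega
    obtain ⟨x, y, hx, hy, hxy⟩ := (Set.one_lt_ncard_iff (hfin i₀)).1 h2
    -- helper : failing set must contain i₀
    have hmem₀ : ∀ z (S : Finset ι),
        mrk N (⋃ i ∈ S, Function.update A i₀ (A i₀ \ {z}) i) < S.card → i₀ ∈ S := by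
      intro z S h
      by_contra hni
      have heq : ⋃ i ∈ S, Function.update A i₀ (A i₀ \ {z}) i = ⋃ i ∈ S, A i := by
        apply Set.iUnion₂_congr
        intro i hi
        exact Function.update_of_ne (fun h' => hni (by rw [← h']; exact hi)) _ _
      rw [heq] at h
      exact absurd (hcond S) (not_le.2 h)
    have key : ∃ z ∈ A i₀, ∀ S : Finset ι,
        S.card ≤ mrk N (⋃ i ∈ S, Function.update A i₀ (A i₀ \ {z}) i) := by
      by_contra hcon
      push_neg at hcon
      obtain ⟨Sx, hSx⟩ := hcon x hx
      obtain ⟨Sy, hSy⟩ := hcon y hy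
      have hix : i₀ ∈ Sx := hmem₀ x Sx hSx
      have hiy : i₀ ∈ Sy := hmem₀ y Sy hSy
      set Tx := Sx.erase i₀ with hTx
      set Ty := Sy.erase i₀ with hTy
      set UX : Set β := ⋃ i ∈ Tx, A i with hUX
      set UY : Set β := ⋃ i ∈ Ty, A i with hUY
      set X : Set β := (A i₀ \ {x}) ∪ UX with hXdef
      set Y : Set β := (A i₀ \ {y}) ∪ UY with hYdef
      have hXeq : ⋃ i ∈ Sx, Function.update A i₀ (A i₀ \ {x}) i = X := by
        conv_lhs => rw [← Finset.insert_erase hix]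
        rw [Finset.set_biUnion_insert, Function.update_self]
        congr 1
        apply Set.iUnion₂_congr
        intro i hi
        exact Function.update_of_ne (Finset.ne_of_mem_erase hi) _ _
      have hYeq : ⋃ i ∈ Sy, Function.update A i₀ (A i₀ \ {y}) i = Y := by
        conv_lhs => rw [← Finset.insert_erase hiy]
        rw [Finset.set_biUnion_insert, Function.update_self]
        congr 1
        apply Set.iUnion₂_congr
        intro i hi
        exact Function.update_of_ne (Finset.ne_of_mem_erase hi) _ _
      rw [hXeq] at hSx
      rw [hYeq] at hSy
      have hrX : mrk N X ≤ Tx.card := by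
        have h := Finset.card_erase_add_one hix
        rw [← hTx] at h
        omega
      have hrY : mrk N Y ≤ Ty.card := by
        have h := Finset.card_erase_add_one hiy
        rw [← hTy] at h
        omega
      have hfinU : ∀ T : Finset ι, (⋃ i ∈ T, A i).Finite :=
        fun T => Set.Finite.biUnion T.finite_toSet (fun i _ => hfin i)
      have hfinX : X.Finite := ((hfin i₀).diff).union (hfinU Tx)
      have hfinY : Y.Finite := ((hfin i₀).diff).union (hfinU Ty)
      have hXY : X ∪ Y = ⋃ i ∈ Sx ∪ Sy, A i := by
        rw [← Finset.insert_erase (Finset.mem_union_left Sy hix),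
          Finset.set_biUnion_insert, Finset.erase_union_distrib,
          Finset.set_biUnion_union]
        ext p
        have hne : ¬(p = x ∧ p = y) := fun ⟨h1, h2⟩ => hxy (h1 ▸ h2 ▸ rfl)
        simp only [hXdef, hYdef, hUX, hUY, Set.mem_union, Set.mem_diff,
          Set.mem_singleton_iff]
        tauto
      have hint : ⋃ i ∈ Tx ∩ Ty, A i ⊆ X ∩ Y := by
        apply Set.iUnion₂_subset
        intro i hi
        refine Set.subset_inter (fun p hp => Or.inr ?_) (fun p hp => Or.inr ?_)
        · exact Set.mem_biUnion (Finset.mem_of_mem_inter_left hi) hp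
        · exact Set.mem_biUnion (Finset.mem_of_mem_inter_right hi) hp
      have c1 : (Sx ∪ Sy).card ≤ mrk N (X ∪ Y) := by
        rw [hXY]; exact hcond (Sx ∪ Sy)
      have c2 : (Tx ∩ Ty).card ≤ mrk N (X ∩ Y) :=
        le_trans (hcond (Tx ∩ Ty)) (mrk_mono (hfinX.subset Set.inter_subset_left) hint)
      have c3 := mrk_submod (N := N) hfinX hfinY
      have c4 : (Tx ∪ Ty).card + 1 = (Sx ∪ Sy).card := by
        rw [hTx, hTy, ← Finset.erase_union_distrib]
        exact Finset.card_erase_add_one (Finset.mem_union_left Sy hix)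
      have c5 := Finset.card_union_add_card_inter Tx Ty
      omega
    obtain ⟨z, hz, hcond'⟩ := key
    set A' := Function.update A i₀ (A i₀ \ {z}) with hA'
    have hsub : ∀ i, A' i ⊆ A i := by
      intro i
      rcases eq_or_ne i i₀ with rfl | hne
      · rw [hA', Function.update_self]; exact Set.diff_subset
      · rw [hA', Function.update_of_ne hne]
    have hfin' : ∀ i, (A' i).Finite := fun i => (hfin i).subset (hsub i)
    have hlt : ∑ i, (A' i).ncard < n := by
      rw [← hsum]
      have hptw : ∀ i, (A' i).ncard
          = Function.update (fun j => (A j).ncard) i₀ (A i₀ \ {z}).ncard i := by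
        intro i
        rw [hA']
        exact Function.apply_update (fun _ s => Set.ncard s) A i₀ _ i
      have h1 : ∑ i, (A' i).ncard
          = (A i₀ \ {z}).ncard + ∑ i ∈ Finset.univ \ {i₀}, (A i).ncard := by
        simp_rw [hptw]
        exact Finset.sum_update_of_mem (Finset.mem_univ i₀) _ _
      have h2 : (A i₀).ncard + ∑ i ∈ Finset.univ.erase i₀, (A i).ncard
          = ∑ i, (A i).ncard :=
        Finset.add_sum_erase _ (fun i => (A i).ncard) (Finset.mem_univ i₀)
      have h3 : (A i₀ \ {z}).ncard < (A i₀).ncard :=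
        Set.ncard_diff_singleton_lt_of_mem hz (hfin i₀)
      rw [h1, ← h2]
      have : Finset.univ \ {i₀} = Finset.univ.erase i₀ := by
        rw [Finset.erase_eq]
      rw [this]
      omega
    obtain ⟨f, hf1, hf2, hf3⟩ := IH _ hlt A' hfin' rfl hcond'
    exact ⟨f, hf1, fun i => hsub i (hf2 i), hf3⟩

/-- If the ground set of a matroid `M` can be partitioned into `k` independent sets,
then from any lists of size `2k` one can choose `2` colors per element so that each
color class is independent in `M`. -/
theorem two_colors_from_lists_of_partition {α : Type*} (M : Matroid α) (hE : M.E.Finite)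
    (k : ℕ) (I : Fin k → Set α) (hIndep : ∀ i, M.Indep (I i))
    (hdisj : Pairwise (Function.onFun Disjoint I)) (hunion : ⋃ i, I i = M.E)
    (L : α → Finset ℕ) (hL : ∀ e ∈ M.E, (L e).card = 2 * k) :
    ∃ L' : α → Finset ℕ, (∀ e ∈ M.E, L' e ⊆ L e ∧ (L' e).card = 2) ∧
      ∀ i : ℕ, M.Indep {e ∈ M.E | i ∈ L' e} := by
  classical
  by_cases hEe : M.E = ∅
  · refine ⟨fun _ => ∅, fun e he => absurd he (by rw [hEe]; exact Set.notMem_empty e), ?_⟩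
    intro i
    have : {e ∈ M.E | i ∈ (∅ : Finset ℕ)} = ∅ := by
      ext e; simp
    rw [this]
    exact M.empty_indep
  · -- k is positive
    obtain ⟨e₀, he₀⟩ := Set.nonempty_iff_ne_empty.2 hEe
    have hk : 0 < k := by
      rw [← hunion] at he₀
      obtain ⟨j, -⟩ := Set.mem_iUnion.1 he₀
      exact j.pos
    set Ec : ℕ → Set α := fun c => {e ∈ M.E | c ∈ L e} with hEc
    set N : Matroid (ℕ × α) := Matroid.sum' (fun c => M.restrict (Ec c)) with hN
    haveI : Fintype ↥M.E := hE.fintype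
    set A : ↥M.E × Bool → Set (ℕ × α) :=
      fun p => (fun c => (c, (p.1 : α))) '' ↑(L (p.1 : α)) with hA
    have hfinA : ∀ p, (A p).Finite := fun p => ((L _).finite_toSet).image _
    -- verify the Rado condition
    have hcond : ∀ S : Finset (↥M.E × Bool), S.card ≤ mrk N (⋃ p ∈ S, A p) := by
      intro S
      set T : Finset α := S.image (fun p => (p.1 : α)) with hT
      have hTE : ∀ e ∈ T, e ∈ M.E := by
        intro e he
        obtain ⟨p, -, rfl⟩ := Finset.mem_image.1 he
        exact p.1.2
      -- |S| ≤ 2 |T|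
      have hST : S.card ≤ 2 * T.card := by
        have h1 : S.card = ∑ e ∈ T, (S.filter (fun p => (p.1 : α) = e)).card :=
          Finset.card_eq_sum_card_fiberwise (fun p hp => Finset.mem_image_of_mem _ hp)
        have h2 : ∀ e ∈ T, (S.filter (fun p => (p.1 : α) = e)).card ≤ 2 := by
          intro e _
          have hinj : Set.InjOn (Prod.snd : ↥M.E × Bool → Bool)
              ↑(S.filter (fun p => (p.1 : α) = e)) := by
            intro p hp q hq hpq
            rw [Finset.mem_coe, Finset.mem_filter] at hp hq
            exact Prod.ext (Subtype.ext (hp.2.trans hq.2.symm)) hpq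
          have hmaps : ∀ p ∈ S.filter (fun p => (p.1 : α) = e),
              Prod.snd p ∈ (Finset.univ : Finset Bool) := fun p _ => Finset.mem_univ _
          have := Finset.card_le_card_of_injOn Prod.snd hmaps hinj
          simpa using this
        calc S.card = ∑ e ∈ T, (S.filter (fun p => (p.1 : α) = e)).card := h1
          _ ≤ ∑ _e ∈ T, 2 := Finset.sum_le_sum h2
          _ = 2 * T.card := by rw [Finset.sum_const, smul_eq_mul, Nat.mul_comm]
      -- union over S equals union of rows over T
      have hW : ⋃ p ∈ S, A p = ⋃ e ∈ T, (fun c => (c, e)) '' ↑(L e) := by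
        ext q
        simp only [Set.mem_iUnion, exists_prop]
        constructor
        · rintro ⟨p, hp, hq⟩
          exact ⟨(p.1 : α), Finset.mem_image_of_mem _ hp, hq⟩
        · rintro ⟨e, he, hq⟩
          obtain ⟨p, hp, rfl⟩ := Finset.mem_image.1 he
          exact ⟨p, hp, hq⟩
      set W : Set (ℕ × α) := ⋃ e ∈ T, (fun c => (c, e)) '' ↑(L e) with hWdef
      have hWfin : W.Finite :=
        Set.Finite.biUnion T.finite_toSet (fun e _ => ((L e).finite_toSet).image _)
      -- colors
      set C : Finset ℕ := T.biUnion L with hC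
      set TE : ℕ → Finset α := fun c => T.filter (fun e => c ∈ L e) with hTEdef
      -- bases of the TE's
      have hex : ∀ c : ℕ, ∃ Jf : Finset α, M.IsBasis' ↑Jf ↑(TE c) := by
        intro c
        obtain ⟨J, hJ⟩ := M.exists_isBasis' ↑(TE c)
        have hfinJ : J.Finite := (TE c).finite_toSet.subset hJ.subset
        exact ⟨hfinJ.toFinset, by rwa [Set.Finite.coe_toFinset]⟩
      choose Jf hJf using hex
      -- counting 1 : (TE c).card ≤ k * (Jf c).card
      have hcount1 : ∀ c, (TE c).card ≤ k * (Jf c).card := by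
        intro c
        have hsubB : TE c ⊆ (Finset.univ : Finset (Fin k)).biUnion
            (fun j => (TE c).filter (fun e => e ∈ I j)) := by
          intro e he
          have heE : e ∈ M.E := hTE e (Finset.mem_of_mem_filter e he)
          rw [← hunion] at heE
          obtain ⟨j, hj⟩ := Set.mem_iUnion.1 heE
          exact Finset.mem_biUnion.2 ⟨j, Finset.mem_univ j,
            Finset.mem_filter.2 ⟨he, hj⟩⟩
        have hcb : ∀ j : Fin k,
            ((TE c).filter (fun e => e ∈ I j)).card ≤ (Jf c).card := by
          intro j
          have hind : M.Indep ↑((TE c).filter (fun e => e ∈ I j)) := by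
            refine (hIndep j).subset ?_
            intro e he
            simp only [Finset.coe_filter, Set.mem_setOf_eq] at he
            exact he.2
          have hsub : (↑((TE c).filter (fun e => e ∈ I j)) : Set α) ⊆ ↑(TE c) := by
            intro e he
            simp only [Finset.coe_filter, Set.mem_setOf_eq] at he
            exact he.1
          have := indep_ncard_le_mrk (TE c).finite_toSet hind hsub
          rwa [mrk_eq_of_basis' (hJf c), Set.ncard_coe_finset, Set.ncard_coe_finset] at this
        calc (TE c).card ≤ ((Finset.univ : Finset (Fin k)).biUnion
              (fun j => (TE c).filter (fun e => e ∈ I j))).card :=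
              Finset.card_le_card hsubB
          _ ≤ ∑ j : Fin k, ((TE c).filter (fun e => e ∈ I j)).card :=
              Finset.card_biUnion_le
          _ ≤ ∑ _j : Fin k, (Jf c).card := Finset.sum_le_sum (fun j _ => hcb j)
          _ = k * (Jf c).card := by rw [Finset.sum_const, Finset.card_univ,
              Fintype.card_fin, smul_eq_mul]
      -- counting 2 : ∑_{c∈C} (TE c).card = 2k|T|
      have hcount2 : ∑ c ∈ C, (TE c).card = 2 * k * T.card := by
        have h1 : ∀ c, (TE c).card = ∑ e ∈ T, if c ∈ L e then 1 else 0 :=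
          fun c => Finset.card_filter _ _
        have h2 : ∀ e ∈ T, (∑ c ∈ C, if c ∈ L e then 1 else 0) = (L e).card := by
          intro e he
          have hsub : L e ⊆ C := fun c hc => Finset.mem_biUnion.2 ⟨e, he, hc⟩
          rw [← Finset.card_filter]
          congr 1
          exact Finset.filter_mem_eq_inter.trans
            ((Finset.inter_eq_right).2 hsub)
        calc ∑ c ∈ C, (TE c).card
            = ∑ c ∈ C, ∑ e ∈ T, if c ∈ L e then 1 else 0 := by
              exact Finset.sum_congr rfl (fun c _ => h1 c)
          _ = ∑ e ∈ T, ∑ c ∈ C, if c ∈ L e then 1 else 0 := Finset.sum_comm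
          _ = ∑ e ∈ T, (L e).card := Finset.sum_congr rfl h2
          _ = ∑ _e ∈ T, 2 * k := Finset.sum_congr rfl (fun e he => hL e (hTE e he))
          _ = 2 * k * T.card := by rw [Finset.sum_const, smul_eq_mul, Nat.mul_comm]
      -- the big independent set
      set J : Finset (ℕ × α) := C.biUnion (fun c => (Jf c).image (fun e => (c, e)))
        with hJdef
      have hJcard : J.card = ∑ c ∈ C, (Jf c).card := by
        rw [hJdef, Finset.card_biUnion]
        · exact Finset.sum_congr rfl (fun c _ =>
            Finset.card_image_of_injective _ (fun a b hab => (Prod.ext_iff.1 hab).2))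
        · intro c₁ h₁ c₂ h₂ hne
          simp only [Finset.disjoint_left, Finset.mem_image]
          rintro q ⟨a, ha, rfl⟩ ⟨b, hb, hq⟩
          exact hne ((Prod.ext_iff.1 hq).1.symm)
      have hTEEc : ∀ c, (↑(TE c) : Set α) ⊆ Ec c := by
        intro c e he
        simp only [hTEdef, Finset.coe_filter, Set.mem_setOf_eq] at he
        exact ⟨hTE e he.1, he.2⟩
      have hJindep : N.Indep ↑J := by
        rw [hN, Matroid.sum'_indep_iff]
        intro c
        have hpre : Prod.mk c ⁻¹' (↑J : Set (ℕ × α)) =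
            if c ∈ C then (↑(Jf c) : Set α) else ∅ := by
          ext e
          simp only [Set.mem_preimage, Finset.coe_biUnion, Set.mem_iUnion,
            Finset.mem_coe, Finset.mem_image, hJdef, Finset.mem_biUnion]
          constructor
          · rintro ⟨c', hc', a, ha, hq⟩
            obtain ⟨h1, h2⟩ := Prod.mk.inj hq
            subst h1
            subst h2
            rw [if_pos hc']
            exact ha
          · intro h
            by_cases hc : c ∈ C
            · rw [if_pos hc] at h
              exact ⟨c, hc, e, h, rfl⟩
            · rw [if_neg hc] at h
              exact absurd h (Set.notMem_empty e)
        rw [hpre]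
        by_cases hc : c ∈ C
        · rw [if_pos hc, Matroid.restrict_indep_iff]
          exact ⟨(hJf c).indep, (hJf c).subset.trans (hTEEc c)⟩
        · rw [if_neg hc]
          exact Matroid.empty_indep _
      have hJW : (↑J : Set (ℕ × α)) ⊆ W := by
        intro q hq
        simp only [Finset.mem_coe, hJdef, Finset.mem_biUnion, Finset.mem_image] at hq
        obtain ⟨c, hc, e, he, rfl⟩ := hq
        have heTE := (hJf c).subset (by exact he)
        simp only [hTEdef, Finset.coe_filter, Set.mem_setOf_eq] at heTE
        rw [hWdef]
        exact Set.mem_biUnion heTE.1 ⟨c, heTE.2, rfl⟩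
      have hJle : J.card ≤ mrk N W := by
        have := indep_ncard_le_mrk hWfin hJindep hJW
        rwa [Set.ncard_coe_finset] at this
      -- put it together
      have hchain : 2 * k * T.card ≤ k * mrk N W := by
        calc 2 * k * T.card = ∑ c ∈ C, (TE c).card := hcount2.symm
          _ ≤ ∑ c ∈ C, k * (Jf c).card := Finset.sum_le_sum (fun c _ => hcount1 c)
          _ = k * ∑ c ∈ C, (Jf c).card := by rw [Finset.mul_sum]
          _ = k * J.card := by rw [hJcard]
          _ ≤ k * mrk N W := Nat.mul_le_mul_left k hJle
      have h2T : 2 * T.card ≤ mrk N W := by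
        have : k * (2 * T.card) ≤ k * mrk N W := by
          calc k * (2 * T.card) = 2 * k * T.card := by ring
            _ ≤ k * mrk N W := hchain
        exact Nat.le_of_mul_le_mul_left this hk
      rw [hW]
      exact le_trans hST (le_trans h2T (le_of_eq rfl))
    -- apply Rado
    obtain ⟨f, hf1, hf2, hf3⟩ := rado_thm N (∑ p, (A p).ncard) A hfinA rfl hcond
    -- structure of f
    have hfst : ∀ p, (f p).1 ∈ L (p.1 : α) := by
      intro p
      obtain ⟨c, hc, hq⟩ := hf2 p
      rw [← hq]
      exact hc
    have hsnd : ∀ p, (f p).2 = (p.1 : α) := by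
      intro p
      obtain ⟨c, hc, hq⟩ := hf2 p
      rw [← hq]
    -- define L'
    refine ⟨fun e => if he : e ∈ M.E then
        {(f (⟨e, he⟩, false)).1, (f (⟨e, he⟩, true)).1} else ∅, ?_, ?_⟩
    · intro e he
      dsimp only
      rw [dif_pos he]
      have hne : (f (⟨e, he⟩, false)).1 ≠ (f (⟨e, he⟩, true)).1 := by
        intro hcontra
        have heq : f (⟨e, he⟩, false) = f (⟨e, he⟩, true) :=
          Prod.ext hcontra ((hsnd (⟨e, he⟩, false)).trans (hsnd (⟨e, he⟩, true)).symm)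
        have := hf1 heq
        simp at this
      constructor
      · intro c hc
        rcases Finset.mem_insert.1 hc with rfl | hc
        · exact hfst (⟨e, he⟩, false)
        · rw [Finset.mem_singleton.1 hc]
          exact hfst (⟨e, he⟩, true)
      · exact Finset.card_pair hne
    · intro i
      have hsubcl : {e ∈ M.E | i ∈ if he : e ∈ M.E then
          ({(f (⟨e, he⟩, false)).1, (f (⟨e, he⟩, true)).1} : Finset ℕ) else ∅}
          ⊆ Prod.mk i ⁻¹' Set.range f := by
        rintro e ⟨he, hi⟩
        rw [dif_pos he] at hi
        rcases Finset.mem_insert.1 hi with rfl | hi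
        · refine ⟨(⟨e, he⟩, false), ?_⟩
          exact Prod.ext rfl (hsnd _)
        · rw [Finset.mem_singleton.1 hi]
          refine ⟨(⟨e, he⟩, true), ?_⟩
          exact Prod.ext rfl (hsnd _)
      have hcol : (M.restrict (Ec i)).Indep (Prod.mk i ⁻¹' Set.range f) := by
        have := (Matroid.sum'_indep_iff).1 (hN ▸ hf3)
        exact this i
      rw [Matroid.restrict_indep_iff] at hcol
      exact hcol.1.subset hsubcl
end

section
/- Let M be a matroid on a finite ground set E, and let a, b be positive integers such that E admits an a-covering by b independent sets of M. Then for every list assignment L on E with |L(e)| = 2b for all e ∈ E, one can choose for each e ∈ E a subset L'(e) ⊆ L(e) with |L'(e)| = 2a such that for every color i ∈ ℕ, the set {e ∈ E : i ∈ L'(e)} is independent in M. -/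
open Set

namespace TwoAColorsAux

variable {α : Type*} {M : Matroid α}

/-- The rank (in `ℕ∞`) of a set in a matroid, as the cardinality of any `Basis'`. -/
noncomputable def mrk (M : Matroid α) (X : Set α) : ℕ∞ :=
  (M.exists_isBasis' X).choose.encard

lemma basis'_mrk {I X : Set α} (h : M.IsBasis' I X) : mrk M X = I.encard :=
  (M.exists_isBasis' X).choose_spec.encard_eq_encard h

lemma indep_encard_le_mrk {I X : Set α} (hI : M.Indep I) (hIX : I ⊆ X) :
    I.encard ≤ mrk M X := by
  obtain ⟨J, hJ, hIJ⟩ := hI.subset_isBasis'_of_subset hIX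
  rw [basis'_mrk hJ]
  exact encard_mono hIJ

lemma mrk_le_encard (M : Matroid α) (X : Set α) : mrk M X ≤ X.encard :=
  (basis'_mrk (M.exists_isBasis' X).choose_spec).le.trans
    (encard_mono (M.exists_isBasis' X).choose_spec.subset)

lemma mrk_mono (M : Matroid α) {X Y : Set α} (h : X ⊆ Y) : mrk M X ≤ mrk M Y := by
  have hI := (M.exists_isBasis' X).choose_spec
  rw [basis'_mrk hI]
  exact indep_encard_le_mrk hI.indep (hI.subset.trans h)

lemma mrk_submod (M : Matroid α) (X Y : Set α) :
    mrk M (X ∪ Y) + mrk M (X ∩ Y) ≤ mrk M X + mrk M Y := by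
  obtain ⟨I, hI⟩ := M.exists_isBasis' (X ∩ Y)
  obtain ⟨J, hJ, hIJ⟩ := hI.indep.subset_isBasis'_of_subset
    (hI.subset.trans (inter_subset_left.trans subset_union_left))
  rw [basis'_mrk hI, basis'_mrk hJ]
  have hJu : (J ∩ X) ∪ (J ∩ Y) = J := by
    rw [← Set.inter_union_distrib_left, Set.inter_eq_left]
    exact hJ.subset
  have hJi : (J ∩ X) ∩ (J ∩ Y) = J ∩ (X ∩ Y) := by
    ext z; simp only [Set.mem_inter_iff]; tauto
  have hkey : J.encard + I.encard ≤ (J ∩ X).encard + (J ∩ Y).encard := by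
    calc J.encard + I.encard
        ≤ ((J ∩ X) ∪ (J ∩ Y)).encard + ((J ∩ X) ∩ (J ∩ Y)).encard := by
          rw [hJu, hJi]
          exact add_le_add le_rfl (encard_mono (subset_inter hIJ hI.subset))
      _ = (J ∩ X).encard + (J ∩ Y).encard := Set.encard_union_add_encard_inter _ _
  refine hkey.trans (add_le_add ?_ ?_)
  · exact indep_encard_le_mrk (hJ.indep.subset inter_subset_left) inter_subset_right
  · exact indep_encard_le_mrk (hJ.indep.subset inter_subset_left) inter_subset_right

lemma mrk_eq_encard_indep {X : Set α} (hfin : X.Finite) (h : X.encard ≤ mrk M X) :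
    M.Indep X := by
  have hI := (M.exists_isBasis' X).choose_spec
  rw [basis'_mrk hI] at h
  have : (M.exists_isBasis' X).choose = X :=
    hfin.eq_of_subset_of_encard_le' hI.subset h
  rw [← this]
  exact hI.indep

/-- Rank of a finset, as a natural number. -/
noncomputable def frk (M : Matroid α) (X : Finset α) : ℕ := (mrk M ↑X).toNat

lemma mrk_coe_ne_top (M : Matroid α) (X : Finset α) : mrk M ↑X ≠ ⊤ := by
  refine ne_top_of_le_ne_top ?_ ((mrk_le_encard M ↑X).trans_eq
    (Set.encard_coe_eq_coe_finsetCard X))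
  simp

lemma frk_cast (M : Matroid α) (X : Finset α) : (frk M X : ℕ∞) = mrk M ↑X :=
  ENat.coe_toNat (mrk_coe_ne_top M X)

lemma frk_le_card (M : Matroid α) (X : Finset α) : frk M X ≤ X.card := by
  rw [← Nat.cast_le (α := ℕ∞), frk_cast]
  exact (mrk_le_encard M ↑X).trans_eq (Set.encard_coe_eq_coe_finsetCard X)

lemma frk_mono (M : Matroid α) {X Y : Finset α} (h : X ⊆ Y) : frk M X ≤ frk M Y := by
  rw [← Nat.cast_le (α := ℕ∞), frk_cast, frk_cast]
  exact mrk_mono M (by exact_mod_cast h)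

lemma frk_submod (M : Matroid α) [DecidableEq α] (X Y : Finset α) :
    frk M (X ∪ Y) + frk M (X ∩ Y) ≤ frk M X + frk M Y := by
  rw [← Nat.cast_le (α := ℕ∞)]
  push_cast [frk_cast]
  exact mrk_submod M ↑X ↑Y

lemma indep_card_le_frk {K X : Finset α} (hK : M.Indep ↑K) (hKX : K ⊆ X) :
    K.card ≤ frk M X := by
  rw [← Nat.cast_le (α := ℕ∞), frk_cast, ← Set.encard_coe_eq_coe_finsetCard K]
  exact indep_encard_le_mrk hK (by exact_mod_cast hKX)

lemma frk_card_indep {X : Finset α} (h : X.card ≤ frk M X) : M.Indep ↑X := by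
  refine mrk_eq_encard_indep X.finite_toSet ?_
  rw [Set.encard_coe_eq_coe_finsetCard, ← frk_cast]
  exact_mod_cast h





variable {β ι : Type*} [DecidableEq β] [DecidableEq ι] [Nonempty β]

lemma rado_small (ρ : Finset β → ℕ) (P : Finset β → Prop)
    (hcard : ∀ X : Finset β, ρ X ≤ X.card)
    (hP : ∀ X : Finset β, X.card ≤ ρ X → P X)
    (S : Finset ι) (A : ι → Finset β)
    (h1 : ∀ i ∈ S, (A i).card ≤ 1)
    (h : ∀ T ⊆ S, T.card ≤ ρ (T.biUnion A)) :
    ∃ f : ι → β, (∀ i ∈ S, f i ∈ A i) ∧ Set.InjOn f ↑S ∧ P (S.image f) := by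
  classical
  have hne : ∀ i ∈ S, ∃ x, A i = {x} := by
    intro i hi
    have h1' := h {i} (by simpa using hi)
    rw [Finset.singleton_biUnion, Finset.card_singleton] at h1'
    exact Finset.card_eq_one.mp (le_antisymm (h1 i hi) (h1'.trans (hcard _)))
  choose g hg using hne
  refine ⟨fun i => if hi : i ∈ S then g i hi else Classical.arbitrary β, ?_, ?_, ?_⟩
  · intro i hi
    show (if hi : i ∈ S then g i hi else Classical.arbitrary β) ∈ A i
    rw [dif_pos hi, hg i hi]
    exact Finset.mem_singleton_self _
  · intro i hi j hj hij
    rw [Finset.mem_coe] at hi hj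
    dsimp only at hij
    rw [dif_pos hi, dif_pos hj] at hij
    by_contra hne'
    have hT := h {i, j} (by simp [Finset.insert_subset_iff, hi, hj])
    rw [Finset.card_insert_of_notMem (by simpa using hne'), Finset.card_singleton] at hT
    have hbU : ({i, j} : Finset ι).biUnion A = {g i hi} := by
      rw [show ({i, j} : Finset ι) = insert i {j} from rfl, Finset.biUnion_insert,
        Finset.singleton_biUnion, hg i hi, hg j hj, ← hij, Finset.union_self]
    rw [hbU] at hT
    have := (hcard {g i hi}).trans_eq (Finset.card_singleton _)
    omega
  · have himg : S.image (fun i => if hi : i ∈ S then g i hi else Classical.arbitrary β)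
        = S.biUnion A := by
      ext b
      simp only [Finset.mem_image, Finset.mem_biUnion]
      constructor
      · rintro ⟨i, hi, rfl⟩
        exact ⟨i, hi, by rw [dif_pos hi, hg i hi]; exact Finset.mem_singleton_self _⟩
      · rintro ⟨i, hi, hb⟩
        refine ⟨i, hi, ?_⟩
        rw [hg i hi, Finset.mem_singleton] at hb
        rw [dif_pos hi, hb]
    refine hP _ ?_
    rw [himg]
    calc (S.biUnion A).card ≤ S.card := by
          refine (Finset.card_biUnion_le).trans ?_
          calc ∑ i ∈ S, (A i).card ≤ ∑ i ∈ S, 1 := Finset.sum_le_sum h1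
            _ = S.card := by simp
      _ ≤ ρ (S.biUnion A) := h S subset_rfl

lemma rado_abstract (ρ : Finset β → ℕ) (P : Finset β → Prop)
    (hmono : ∀ ⦃X Y : Finset β⦄, X ⊆ Y → ρ X ≤ ρ Y)
    (hsub : ∀ X Y : Finset β, ρ (X ∪ Y) + ρ (X ∩ Y) ≤ ρ X + ρ Y)
    (hcard : ∀ X : Finset β, ρ X ≤ X.card)
    (hP : ∀ X : Finset β, X.card ≤ ρ X → P X)
    (n : ℕ) (S : Finset ι) (A : ι → Finset β) (hn : ∑ i ∈ S, (A i).card ≤ n)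
    (h : ∀ T ⊆ S, T.card ≤ ρ (T.biUnion A)) :
    ∃ f : ι → β, (∀ i ∈ S, f i ∈ A i) ∧ Set.InjOn f ↑S ∧ P (S.image f) := by
  classical
  induction n generalizing A with
  | zero =>
    refine rado_small ρ P hcard hP S A (fun i hi => ?_) h
    have h0 : (A i).card ≤ ∑ i ∈ S, (A i).card :=
      Finset.single_le_sum (f := fun i => (A i).card) (fun _ _ => Nat.zero_le _) hi
    omega
  | succ n IH =>
    by_cases hsmall : ∀ i ∈ S, (A i).card ≤ 1
    · exact rado_small ρ P hcard hP S A hsmall h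
    push_neg at hsmall
    obtain ⟨i₀, hi₀S, hi₀⟩ := hsmall
    obtain ⟨x, hx, y, hy, hxy⟩ := Finset.one_lt_card.mp hi₀
    -- helper facts about updates
    have hupdsub : ∀ z : β, ∀ i, Function.update A i₀ ((A i₀).erase z) i ⊆ A i := by
      intro z i
      rcases eq_or_ne i i₀ with rfl | hne'
      · rw [Function.update_self]; exact Finset.erase_subset _ _
      · rw [Function.update_of_ne hne']
    have hupdsum : ∀ z ∈ A i₀,
        ∑ i ∈ S, (Function.update A i₀ ((A i₀).erase z) i).card ≤ n := by
      intro z hz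
      have h1 : ∑ i ∈ S.erase i₀, (Function.update A i₀ ((A i₀).erase z) i).card
          = ∑ i ∈ S.erase i₀, (A i).card := by
        refine Finset.sum_congr rfl fun i hi => ?_
        rw [Function.update_of_ne (Finset.ne_of_mem_erase hi)]
      have h2 : (∑ i ∈ S.erase i₀, (Function.update A i₀ ((A i₀).erase z) i).card)
          + (Function.update A i₀ ((A i₀).erase z) i₀).card
          = ∑ i ∈ S, (Function.update A i₀ ((A i₀).erase z) i).card :=
        Finset.sum_erase_add S _ hi₀S
      have h3 : (∑ i ∈ S.erase i₀, (A i).card) + (A i₀).card = ∑ i ∈ S, (A i).card :=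
        Finset.sum_erase_add S _ hi₀S
      have h4 : (Function.update A i₀ ((A i₀).erase z) i₀).card = (A i₀).card - 1 := by
        rw [Function.update_self, Finset.card_erase_of_mem hz]
      have h5 : 1 ≤ (A i₀).card := Finset.card_pos.mpr ⟨z, hz⟩
      omega
    -- try erasing x
    by_cases hx' : ∀ T ⊆ S, T.card ≤ ρ (T.biUnion (Function.update A i₀ ((A i₀).erase x)))
    · obtain ⟨f, hf1, hf2, hf3⟩ := IH _ (hupdsum x hx) hx'
      exact ⟨f, fun i hi => hupdsub x i (hf1 i hi), hf2, hf3⟩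
    by_cases hy' : ∀ T ⊆ S, T.card ≤ ρ (T.biUnion (Function.update A i₀ ((A i₀).erase y)))
    · obtain ⟨f, hf1, hf2, hf3⟩ := IH _ (hupdsum y hy) hy'
      exact ⟨f, fun i hi => hupdsub y i (hf1 i hi), hf2, hf3⟩
    exfalso
    push_neg at hx' hy'
    obtain ⟨Tx, hTxS, hTx⟩ := hx'
    obtain ⟨Ty, hTyS, hTy⟩ := hy'
    set Ax := Function.update A i₀ ((A i₀).erase x) with hAxdef
    set Ay := Function.update A i₀ ((A i₀).erase y) with hAydef
    have hmemTx : i₀ ∈ Tx := by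
      by_contra hcon
      have : Tx.biUnion Ax = Tx.biUnion A :=
        Finset.biUnion_congr rfl fun i hi => by
          rw [hAxdef, Function.update_of_ne (by rintro rfl; exact hcon hi)]
      rw [this] at hTx
      exact absurd (h Tx hTxS) (not_le.mpr hTx)
    have hmemTy : i₀ ∈ Ty := by
      by_contra hcon
      have : Ty.biUnion Ay = Ty.biUnion A :=
        Finset.biUnion_congr rfl fun i hi => by
          rw [hAydef, Function.update_of_ne (by rintro rfl; exact hcon hi)]
      rw [this] at hTy
      exact absurd (h Ty hTyS) (not_le.mpr hTy)
    set Px := Tx.biUnion Ax with hPxdef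
    set Py := Ty.biUnion Ay with hPydef
    have hincl1 : (Tx ∪ Ty).biUnion A ⊆ Px ∪ Py := by
      intro b hb
      rw [Finset.mem_biUnion] at hb
      obtain ⟨i, hi, hbA⟩ := hb
      rw [Finset.mem_union] at hi
      rw [Finset.mem_union]
      rcases eq_or_ne i i₀ with rfl | hne'
      · rcases eq_or_ne b x with rfl | hbx
        · refine Or.inr (Finset.mem_biUnion.mpr ⟨i, hmemTy, ?_⟩)
          rw [hAydef, Function.update_self]
          exact Finset.mem_erase.mpr ⟨hxy, hbA⟩
        · refine Or.inl (Finset.mem_biUnion.mpr ⟨i, hmemTx, ?_⟩)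
          rw [hAxdef, Function.update_self]
          exact Finset.mem_erase.mpr ⟨hbx, hbA⟩
      · rcases hi with hi | hi
        · refine Or.inl (Finset.mem_biUnion.mpr ⟨i, hi, ?_⟩)
          rw [hAxdef, Function.update_of_ne hne']; exact hbA
        · refine Or.inr (Finset.mem_biUnion.mpr ⟨i, hi, ?_⟩)
          rw [hAydef, Function.update_of_ne hne']; exact hbA
    have hincl2 : ((Tx ∩ Ty).erase i₀).biUnion A ⊆ Px ∩ Py := by
      intro b hb
      rw [Finset.mem_biUnion] at hb
      obtain ⟨i, hi, hbA⟩ := hb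
      have hne' : i ≠ i₀ := Finset.ne_of_mem_erase hi
      have hi' := Finset.mem_of_mem_erase hi
      rw [Finset.mem_inter] at hi'
      rw [Finset.mem_inter]
      constructor
      · refine Finset.mem_biUnion.mpr ⟨i, hi'.1, ?_⟩
        rw [hAxdef, Function.update_of_ne hne']; exact hbA
      · refine Finset.mem_biUnion.mpr ⟨i, hi'.2, ?_⟩
        rw [hAydef, Function.update_of_ne hne']; exact hbA
    have c1 : (Tx ∪ Ty).card ≤ ρ (Px ∪ Py) :=
      (h (Tx ∪ Ty) (Finset.union_subset hTxS hTyS)).trans (hmono hincl1)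
    have c2 : ((Tx ∩ Ty).erase i₀).card ≤ ρ (Px ∩ Py) :=
      (h _ (((Tx ∩ Ty).erase_subset i₀).trans
        (Finset.inter_subset_left.trans hTxS))).trans (hmono hincl2)
    have c3 := hsub Px Py
    have c6 := Finset.card_union_add_card_inter Tx Ty
    have c7 : ((Tx ∩ Ty).erase i₀).card = (Tx ∩ Ty).card - 1 :=
      Finset.card_erase_of_mem (Finset.mem_inter.mpr ⟨hmemTx, hmemTy⟩)
    have c8 : 1 ≤ (Tx ∩ Ty).card :=
      Finset.card_pos.mpr ⟨i₀, Finset.mem_inter.mpr ⟨hmemTx, hmemTy⟩⟩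
    omega





variable {α : Type*} {M : Matroid α} [DecidableEq α]

/-- The fiber of a finite set of (color, element) pairs over a color. -/
def fib (X : Finset (ℕ × α)) (c : ℕ) : Finset α :=
  (X.filter fun p => p.1 = c).image Prod.snd

lemma mem_fib {X : Finset (ℕ × α)} {c : ℕ} {e : α} : e ∈ fib X c ↔ (c, e) ∈ X := by
  constructor
  · intro h
    obtain ⟨⟨c', e'⟩, hp, he⟩ := Finset.mem_image.mp h
    obtain ⟨hpX, hpc⟩ := Finset.mem_filter.mp hp
    dsimp only at hpc he
    subst hpc; subst he
    exact hpX
  · intro h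
    exact Finset.mem_image.mpr ⟨(c, e), Finset.mem_filter.mpr ⟨h, rfl⟩, rfl⟩

lemma fib_mono {X Y : Finset (ℕ × α)} (h : X ⊆ Y) (c : ℕ) : fib X c ⊆ fib Y c :=
  fun _ he => mem_fib.mpr (h (mem_fib.mp he))

lemma fib_union (X Y : Finset (ℕ × α)) (c : ℕ) :
    fib (X ∪ Y) c = fib X c ∪ fib Y c := by
  ext e; simp only [mem_fib, Finset.mem_union]

lemma fib_inter (X Y : Finset (ℕ × α)) (c : ℕ) :
    fib (X ∩ Y) c = fib X c ∩ fib Y c := by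
  ext e; simp only [mem_fib, Finset.mem_inter]

lemma card_fib_le (X : Finset (ℕ × α)) (c : ℕ) :
    (fib X c).card ≤ (X.filter fun p => p.1 = c).card :=
  Finset.card_image_le

lemma sum_card_filter_fst (X : Finset (ℕ × α)) (C : Finset ℕ) :
    ∑ c ∈ C, (X.filter fun p => p.1 = c).card
      = ∑ p ∈ X, (if p.1 ∈ C then 1 else 0) := by
  calc ∑ c ∈ C, (X.filter fun p => p.1 = c).card
      = ∑ c ∈ C, ∑ p ∈ X, (if p.1 = c then 1 else 0) :=
        Finset.sum_congr rfl fun c _ => Finset.card_filter _ _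
    _ = ∑ p ∈ X, ∑ c ∈ C, (if p.1 = c then 1 else 0) := Finset.sum_comm
    _ = ∑ p ∈ X, (if p.1 ∈ C then 1 else 0) :=
        Finset.sum_congr rfl fun p _ => Finset.sum_ite_eq C p.1 (fun _ => 1)

lemma sum_ite_le_card (X : Finset (ℕ × α)) (C : Finset ℕ) :
    (∑ p ∈ X, (if p.1 ∈ C then 1 else 0)) ≤ X.card := by
  calc (∑ p ∈ X, (if p.1 ∈ C then 1 else 0)) ≤ ∑ _p ∈ X, 1 :=
        Finset.sum_le_sum fun p _ => by split <;> omega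
    _ = X.card := by simp

end TwoAColorsAux

open TwoAColorsAux in
/-- If the ground set of a matroid `M` admits an `a`-covering by `b` independent sets,
then from any lists of size `2b` one can choose `2a` colors per element so that each
color class is independent in `M`. -/
theorem two_a_colors_from_lists_of_covering {α : Type*} (M : Matroid α) (hE : M.E.Finite)
    (a b : ℕ) (ha : 0 < a) (hb : 0 < b) (V : Fin b → Set α)
    (hIndep : ∀ i, M.Indep (V i)) (hcov : ∀ e ∈ M.E, {i : Fin b | e ∈ V i}.ncard = a)
    (L : α → Finset ℕ) (hL : ∀ e ∈ M.E, (L e).card = 2 * b) :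
    ∃ L' : α → Finset ℕ, (∀ e ∈ M.E, L' e ⊆ L e ∧ (L' e).card = 2 * a) ∧
      ∀ i : ℕ, M.Indep {e ∈ M.E | i ∈ L' e} := by
  classical
  cases isEmpty_or_nonempty α with
  | inl hα =>
    refine ⟨fun _ => ∅, fun e _ => (IsEmpty.false e).elim, fun i => ?_⟩
    convert M.empty_indep using 1
    ext e
    exact (IsEmpty.false e).elim
  | inr hα =>
  have : Nonempty (ℕ × α) := hα.elim fun x => ⟨(0, x)⟩
  set Efin : Finset α := hE.toFinset with hEfin
  set C : Finset ℕ := Efin.biUnion L with hCdef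
  -- the rank bound coming from the covering
  have hrank : ∀ Z : Finset α, (↑Z : Set α) ⊆ M.E → a * Z.card ≤ b * frk M Z := by
    intro Z hZ
    have hcount : ∑ i : Fin b, (Z.filter fun e => e ∈ V i).card = a * Z.card := by
      calc ∑ i : Fin b, (Z.filter fun e => e ∈ V i).card
          = ∑ i : Fin b, ∑ e ∈ Z, (if e ∈ V i then 1 else 0) :=
            Finset.sum_congr rfl fun i _ => Finset.card_filter _ _
        _ = ∑ e ∈ Z, ∑ i : Fin b, (if e ∈ V i then 1 else 0) := Finset.sum_comm
        _ = ∑ _e ∈ Z, a := by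
            refine Finset.sum_congr rfl fun e he => ?_
            have heE : e ∈ M.E := hZ he
            have h1 : {i : Fin b | e ∈ V i}
                = ↑(Finset.univ.filter fun i => e ∈ V i) := by
              ext i; simp
            have h2 := hcov e heE
            rw [h1, Set.ncard_coe_finset] at h2
            rw [← h2, Finset.card_filter]
        _ = a * Z.card := by rw [Finset.sum_const, smul_eq_mul, mul_comm]
    have hle : ∀ i : Fin b, (Z.filter fun e => e ∈ V i).card ≤ frk M Z := by
      intro i
      refine indep_card_le_frk ((hIndep i).subset ?_) (Finset.filter_subset _ _)
      intro e he
      rw [Finset.mem_coe, Finset.mem_filter] at he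
      exact he.2
    calc a * Z.card = ∑ i : Fin b, (Z.filter fun e => e ∈ V i).card := hcount.symm
      _ ≤ ∑ _i : Fin b, frk M Z := Finset.sum_le_sum fun i _ => hle i
      _ = b * frk M Z := by
          rw [Finset.sum_const, Finset.card_univ, Fintype.card_fin, smul_eq_mul]
  -- hypotheses of the abstract Rado lemma
  have hmono : ∀ ⦃X Y : Finset (ℕ × α)⦄, X ⊆ Y →
      (∑ c ∈ C, frk M (fib X c)) ≤ ∑ c ∈ C, frk M (fib Y c) :=
    fun X Y h => Finset.sum_le_sum fun c _ => frk_mono M (fib_mono h c)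
  have hsubmod : ∀ X Y : Finset (ℕ × α),
      (∑ c ∈ C, frk M (fib (X ∪ Y) c)) + ∑ c ∈ C, frk M (fib (X ∩ Y) c)
        ≤ (∑ c ∈ C, frk M (fib X c)) + ∑ c ∈ C, frk M (fib Y c) := by
    intro X Y
    rw [← Finset.sum_add_distrib, ← Finset.sum_add_distrib]
    refine Finset.sum_le_sum fun c _ => ?_
    rw [fib_union, fib_inter]
    exact frk_submod M _ _
  have hcard : ∀ X : Finset (ℕ × α), (∑ c ∈ C, frk M (fib X c)) ≤ X.card := by
    intro X
    calc ∑ c ∈ C, frk M (fib X c)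
        ≤ ∑ c ∈ C, (X.filter fun p => p.1 = c).card :=
          Finset.sum_le_sum fun c _ => (frk_le_card M _).trans (card_fib_le X c)
      _ = ∑ p ∈ X, (if p.1 ∈ C then 1 else 0) := sum_card_filter_fst X C
      _ ≤ X.card := sum_ite_le_card X C
  have hPind : ∀ X : Finset (ℕ × α), X.card ≤ (∑ c ∈ C, frk M (fib X c)) →
      ∀ c : ℕ, M.Indep ↑(fib X c) := by
    intro X hX c
    have t0 : (∑ c ∈ C, frk M (fib X c)) ≤ ∑ c ∈ C, (fib X c).card :=
      Finset.sum_le_sum fun c _ => frk_le_card M _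
    have t1 : (∑ c ∈ C, (fib X c).card) ≤ ∑ c ∈ C, (X.filter fun p => p.1 = c).card :=
      Finset.sum_le_sum fun c _ => card_fib_le X c
    have t2 := sum_card_filter_fst X C
    have t3 := sum_ite_le_card X C
    by_cases hcC : c ∈ C
    · by_contra hind
      have hlt : frk M (fib X c) < (fib X c).card := by
        refine lt_of_le_of_ne (frk_le_card M _) fun hh => hind (frk_card_indep hh.symm.le)
      have hstrict : (∑ c ∈ C, frk M (fib X c)) < ∑ c ∈ C, (fib X c).card :=
        Finset.sum_lt_sum (fun c _ => frk_le_card M _) ⟨c, hcC, hlt⟩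
      omega
    · have hall : ∀ p ∈ X, p.1 ∈ C := by
        by_contra hcon
        push_neg at hcon
        obtain ⟨p₀, hp₀, hp₀C⟩ := hcon
        have hstrict : (∑ p ∈ X, (if p.1 ∈ C then 1 else 0)) < ∑ _p ∈ X, 1 :=
          Finset.sum_lt_sum (fun p _ => by split <;> omega)
            ⟨p₀, hp₀, by rw [if_neg hp₀C]; omega⟩
        have hs1 : (∑ _p ∈ X, 1) = X.card := by simp
        omega
      have hfe : fib X c = ∅ :=
        Finset.eq_empty_of_forall_notMem fun e he => hcC (hall _ (mem_fib.mp he))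
      rw [hfe, Finset.coe_empty]
      exact M.empty_indep
  -- the Rado instance
  set S : Finset (α × Fin (2 * a)) := Efin ×ˢ Finset.univ with hSdef
  set A : α × Fin (2 * a) → Finset (ℕ × α) :=
    (fun p => (L p.1).image fun c => (c, p.1)) with hAdef
  have hmemS : ∀ e ∈ M.E, ∀ t : Fin (2 * a), (e, t) ∈ S := fun e he t =>
    Finset.mem_product.mpr ⟨hE.mem_toFinset.mpr he, Finset.mem_univ t⟩
  have hcond : ∀ T ⊆ S, T.card ≤ ∑ c ∈ C, frk M (fib (T.biUnion A) c) := by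
    intro T hTS
    set Y : Finset α := T.image Prod.fst with hYdef
    have hYE : (↑Y : Set α) ⊆ M.E := by
      intro e he
      rw [Finset.mem_coe, hYdef] at he
      obtain ⟨p, hpT, rfl⟩ := Finset.mem_image.mp he
      have hp := hTS hpT
      rw [hSdef, Finset.mem_product] at hp
      exact hE.mem_toFinset.mp hp.1
    have hTY : T.card ≤ Y.card * (2 * a) := by
      have hsub : T ⊆ Y ×ˢ (Finset.univ : Finset (Fin (2 * a))) := fun p hp =>
        Finset.mem_product.mpr ⟨Finset.mem_image_of_mem _ hp, Finset.mem_univ _⟩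
      calc T.card ≤ (Y ×ˢ (Finset.univ : Finset (Fin (2 * a)))).card :=
            Finset.card_le_card hsub
        _ = Y.card * (2 * a) := by
            rw [Finset.card_product, Finset.card_univ, Fintype.card_fin]
    have hfibT : ∀ c, fib (T.biUnion A) c = Y.filter fun e => c ∈ L e := by
      intro c
      ext e
      rw [mem_fib, Finset.mem_biUnion, Finset.mem_filter]
      constructor
      · rintro ⟨⟨e', t⟩, hpT, hmem⟩
        rw [hAdef] at hmem
        obtain ⟨c', hc', heq⟩ := Finset.mem_image.mp hmem
        injection heq with h1 h2
        subst h1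
        exact ⟨Finset.mem_image.mpr ⟨(e', t), hpT, h2⟩, h2 ▸ hc'⟩
      · rintro ⟨heY, hcL⟩
        rw [hYdef] at heY
        obtain ⟨⟨e', t⟩, hpT, hfst⟩ := Finset.mem_image.mp heY
        dsimp only at hfst
        subst hfst
        exact ⟨(e', t), hpT, by rw [hAdef]; exact Finset.mem_image.mpr ⟨c, hcL, rfl⟩⟩
    have hsumY : ∑ c ∈ C, (Y.filter fun e => c ∈ L e).card = Y.card * (2 * b) := by
      calc ∑ c ∈ C, (Y.filter fun e => c ∈ L e).card
          = ∑ c ∈ C, ∑ e ∈ Y, (if c ∈ L e then 1 else 0) :=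
            Finset.sum_congr rfl fun c _ => Finset.card_filter _ _
        _ = ∑ e ∈ Y, ∑ c ∈ C, (if c ∈ L e then 1 else 0) := Finset.sum_comm
        _ = ∑ e ∈ Y, (L e).card := by
            refine Finset.sum_congr rfl fun e he => ?_
            have heE : e ∈ M.E := hYE he
            have hLC : L e ⊆ C := fun c hc =>
              Finset.mem_biUnion.mpr ⟨e, hE.mem_toFinset.mpr heE, hc⟩
            rw [← Finset.card_filter]
            congr 1
            ext c
            rw [Finset.mem_filter]
            exact ⟨fun h => h.2, fun h => ⟨hLC h, h⟩⟩
        _ = ∑ _e ∈ Y, 2 * b := Finset.sum_congr rfl fun e he => hL e (hYE he)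
        _ = Y.card * (2 * b) := by rw [Finset.sum_const, smul_eq_mul, mul_comm]
    have hmain : Y.card * (2 * a) ≤ ∑ c ∈ C, frk M (fib (T.biUnion A) c) := by
      have h1 : ∀ c ∈ C, a * (Y.filter fun e => c ∈ L e).card
          ≤ b * frk M (fib (T.biUnion A) c) := by
        intro c _
        rw [hfibT c]
        exact hrank _ ((Finset.coe_subset.mpr (Finset.filter_subset _ _)).trans hYE)
      have h2 : (∑ c ∈ C, a * (Y.filter fun e => c ∈ L e).card)
          ≤ ∑ c ∈ C, b * frk M (fib (T.biUnion A) c) := Finset.sum_le_sum h1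
      rw [← Finset.mul_sum, ← Finset.mul_sum, hsumY] at h2
      have h3 : b * (Y.card * (2 * a)) ≤ b * ∑ c ∈ C, frk M (fib (T.biUnion A) c) := by
        calc b * (Y.card * (2 * a)) = a * (Y.card * (2 * b)) := by ring
          _ ≤ b * ∑ c ∈ C, frk M (fib (T.biUnion A) c) := h2
      exact Nat.le_of_mul_le_mul_left h3 hb
    exact hTY.trans hmain
  obtain ⟨f, hfA, hfInj, hfP⟩ :=
    rado_abstract (fun X => ∑ c ∈ C, frk M (fib X c))
      (fun X => ∀ c : ℕ, M.Indep ↑(fib X c)) hmono hsubmod hcard hPind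
      (∑ i ∈ S, (A i).card) S A le_rfl hcond
  have hfst : ∀ e, e ∈ M.E → ∀ t : Fin (2 * a),
      (f (e, t)).1 ∈ L e ∧ (f (e, t)).2 = e := by
    intro e he t
    have hmem := hfA (e, t) (hmemS e he t)
    rw [hAdef] at hmem
    obtain ⟨c, hc, heq⟩ := Finset.mem_image.mp hmem
    rw [← heq]
    exact ⟨hc, rfl⟩
  refine ⟨fun e => Finset.univ.image fun t : Fin (2 * a) => (f (e, t)).1,
    fun e he => ⟨?_, ?_⟩, fun i => ?_⟩
  · intro c hc
    obtain ⟨t, _, rfl⟩ := Finset.mem_image.mp hc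
    exact (hfst e he t).1
  · rw [Finset.card_image_of_injOn, Finset.card_univ, Fintype.card_fin]
    intro t _ t' _ htt
    have h1 : f (e, t) = f (e, t') :=
      Prod.ext_iff.mpr ⟨htt, (hfst e he t).2.trans ((hfst e he t').2).symm⟩
    have h2 := hfInj (Finset.mem_coe.mpr (hmemS e he t))
      (Finset.mem_coe.mpr (hmemS e he t')) h1
    exact (Prod.ext_iff.mp h2).2
  · refine (hfP i).subset ?_
    rintro e ⟨heE, hiL⟩
    obtain ⟨t, _, ht⟩ := Finset.mem_image.mp hiL
    rw [Finset.mem_coe, mem_fib]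
    exact Finset.mem_image.mpr
      ⟨(e, t), hmemS e heE t, Prod.ext_iff.mpr ⟨ht, (hfst e heE t).2⟩⟩
end

section
/- Let G be a finite connected simple graph with vertex set V of size n and edge set E(G). For an edge e = {u,v} define ℓ(e) = max(deg(u), deg(v)) + 1, where deg denotes the degree in G. For each integer i ≥ 1 let G_i be the spanning subgraph of G with edge set {e ∈ E(G) : ℓ(e) ≥ i}, and let c(G_i) denote the number of connected components of G_i (counting isolated vertices). Then Σ_{i=1}^{n} (n − c(G_i)) ≥ 2·|E(G)|. -/
/-- The spanning subgraph of `G` whose edges are those edges `{u, v}` of `G` with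
`max (deg u) (deg v) + 1 ≥ i`. -/
def degreeLevelSubgraph {V : Type*} [Fintype V] (G : SimpleGraph V) [DecidableRel G.Adj]
    (i : ℕ) : SimpleGraph V where
  Adj u v := G.Adj u v ∧ i ≤ max (G.degree u) (G.degree v) + 1
  symm := ⟨fun u v ⟨h1, h2⟩ => ⟨h1.symm, by rwa [max_comm]⟩⟩
  loopless := ⟨fun v h => G.loopless.irrefl v h.1⟩

/-- If every vertex of `S` has a neighbor (in `H`) of strictly smaller `d`-value, then
the number of connected components of `H` plus `|S|` is at most `|V|`. -/
lemma comp_card_add_le {V : Type*} [Fintype V] [DecidableEq V] (H : SimpleGraph V)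
    (d : V → ℕ) (S : Finset V)
    (hS : ∀ v ∈ S, ∃ p, H.Adj v p ∧ d p < d v) :
    Nat.card H.ConnectedComponent + S.card ≤ Fintype.card V := by
  classical
  -- choose a `d`-minimal vertex in each component
  have hmin : ∀ c : H.ConnectedComponent, ∃ v, H.connectedComponentMk v = c ∧
      ∀ w, H.connectedComponentMk w = c → d v ≤ d w := by
    intro c
    obtain ⟨v0, hv0⟩ := c.exists_rep
    have hne : (d '' {v | H.connectedComponentMk v = c}).Nonempty := ⟨d v0, v0, hv0, rfl⟩
    obtain ⟨v, hv, hvd⟩ := Nat.sInf_mem hne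
    refine ⟨v, hv, fun w hw => ?_⟩
    rw [hvd]
    exact Nat.sInf_le ⟨w, hw, rfl⟩
  choose f hf hfmin using hmin
  have hfS : ∀ c, f c ∉ S := by
    intro c hc
    obtain ⟨p, hadj, hlt⟩ := hS _ hc
    have hp : H.connectedComponentMk p = c := by
      rw [← hf c]
      exact (SimpleGraph.ConnectedComponent.sound hadj.symm.reachable)
    exact absurd (hfmin c p hp) (by omega)
  have hinj : Function.Injective (fun c => (⟨f c, hfS c⟩ : {v : V // v ∉ S})) := by
    intro c₁ c₂ h
    simp only [Subtype.mk.injEq] at h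
    rw [← hf c₁, h, hf c₂]
  have h1 : Nat.card H.ConnectedComponent ≤ Nat.card {v : V // v ∉ S} :=
    Nat.card_le_card_of_injective _ hinj
  have h2 : Nat.card {v : V // v ∉ S} = Fintype.card V - S.card := by
    rw [Nat.card_eq_fintype_card, Fintype.card_subtype]
    have : (Finset.univ.filter (fun v => v ∉ S)) = Sᶜ := by
      ext v; simp
    rw [this, Finset.card_compl]
  have h3 : S.card ≤ Fintype.card V := S.card_le_univ.trans_eq (by simp)
  omega

/-- In a connected graph, every vertex other than `r` has a neighbor strictly
closer to `r`. -/
lemma exists_parent {V : Type*} (G : SimpleGraph V) (hG : G.Connected) (r v : V)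
    (hv : v ≠ r) : ∃ p, G.Adj v p ∧ G.dist r p < G.dist r v := by
  have h0 : G.dist v r ≠ 0 := by
    rw [SimpleGraph.dist_ne_zero_iff_ne_and_reachable]
    exact ⟨hv, hG.preconnected v r⟩
  obtain ⟨w, hw⟩ := (hG.preconnected v r).exists_walk_length_eq_dist
  cases w with
  | nil => simp_all
  | cons h q =>
    rename_i p
    refine ⟨p, h, ?_⟩
    have e1 : G.dist r p = G.dist p r := SimpleGraph.dist_comm
    have e2 : G.dist r v = G.dist v r := SimpleGraph.dist_comm
    have h3 := SimpleGraph.dist_le q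
    simp only [SimpleGraph.Walk.length_cons] at hw
    omega

/-- For a finite connected graph `G` on `n` vertices, with `G_i` the spanning subgraph
with edge set `{e ∈ E(G) : ℓ(e) ≥ i}` where `ℓ({u,v}) = max (deg u) (deg v) + 1`, one
has `Σ_{i=1}^{n} (n − c(G_i)) ≥ 2 |E(G)|`, where `c` counts connected components. -/
theorem sum_rank_levels_ge_two_mul_edges {V : Type*} [Fintype V] [DecidableEq V]
    (G : SimpleGraph V) [DecidableRel G.Adj] (hG : G.Connected)
    (n : ℕ) (hn : n = Fintype.card V) :
    2 * G.edgeFinset.card ≤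
      ∑ i ∈ Finset.Icc 1 n,
        (n - Nat.card (degreeLevelSubgraph G i).ConnectedComponent) := by
  classical
  obtain ⟨r⟩ := hG.nonempty
  set S : ℕ → Finset V := fun i =>
    (Finset.univ.erase r).filter (fun v => i ≤ G.degree v + 1) with hSdef
  have hdeg : ∀ v : V, G.degree v + 1 ≤ n := by
    intro v
    have := G.degree_lt_card_verts v
    omega
  -- per-level bound
  have key : ∀ i, (S i).card ≤ n - Nat.card (degreeLevelSubgraph G i).ConnectedComponent := by
    intro i
    have h := comp_card_add_le (degreeLevelSubgraph G i) (G.dist r) (S i) ?_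
    · omega
    · intro v hv
      simp only [hSdef, Finset.mem_filter, Finset.mem_erase] at hv
      obtain ⟨⟨hvr, -⟩, hvi⟩ := hv
      obtain ⟨p, hadj, hlt⟩ := exists_parent G hG r v hvr
      refine ⟨p, ⟨hadj, ?_⟩, hlt⟩
      exact hvi.trans (by have := le_max_left (G.degree v) (G.degree p); omega)
  -- double counting
  have hswap : ∑ i ∈ Finset.Icc 1 n, (S i).card
      = ∑ v ∈ Finset.univ.erase r, (G.degree v + 1) := by
    have h1 : ∀ i, (S i).card
        = ∑ v ∈ Finset.univ.erase r, (if i ≤ G.degree v + 1 then 1 else 0) := by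
      intro i; exact Finset.card_filter _ _
    simp only [h1]
    rw [Finset.sum_comm]
    refine Finset.sum_congr rfl fun v _ => ?_
    rw [← Finset.card_filter]
    have : (Finset.Icc 1 n).filter (fun i => i ≤ G.degree v + 1)
        = Finset.Icc 1 (G.degree v + 1) := by
      ext i
      simp only [Finset.mem_filter, Finset.mem_Icc]
      have := hdeg v
      omega
    rw [this, Nat.card_Icc]; omega
  -- degree sum
  have hsum : ∑ v ∈ Finset.univ.erase r, G.degree v + G.degree r = 2 * G.edgeFinset.card := by
    rw [Finset.sum_erase_add, G.sum_degrees_eq_twice_card_edges]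
    exact Finset.mem_univ r
  have hcard : (Finset.univ.erase r).card = n - 1 := by
    rw [Finset.card_erase_of_mem (Finset.mem_univ r), Finset.card_univ, hn]
  have hsplit : ∑ v ∈ Finset.univ.erase r, (G.degree v + 1)
      = ∑ v ∈ Finset.univ.erase r, G.degree v + (n - 1) := by
    rw [Finset.sum_add_distrib, Finset.sum_const, smul_eq_mul, mul_one, hcard]
  have hr : G.degree r + 1 ≤ n := hdeg r
  calc 2 * G.edgeFinset.card ≤ ∑ v ∈ Finset.univ.erase r, (G.degree v + 1) := by omega
    _ = ∑ i ∈ Finset.Icc 1 n, (S i).card := hswap.symm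
    _ ≤ _ := Finset.sum_le_sum fun i _ => key i
end

section
/- Let G be a finite connected simple graph with vertex set V of size n, and let i ≥ 1 be an integer. Let G_i' be the spanning subgraph of G whose edges are those edges {u,v} of G with max(deg(u), deg(v)) ≥ i, where deg denotes the degree in G, and let c(G_i') denote the number of connected components of G_i' (counting isolated vertices). Then n − c(G_i') + 1 ≥ |{v ∈ V : deg(v) ≥ i}|. -/
/-- The spanning subgraph of `G` whose edges are those edges `{u, v}` of `G` with
`max (deg u) (deg v) ≥ i`. -/
def degreeLevelSubgraph' {V : Type*} [Fintype V] (G : SimpleGraph V) [DecidableRel G.Adj]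
    (i : ℕ) : SimpleGraph V where
  Adj u v := G.Adj u v ∧ i ≤ max (G.degree u) (G.degree v)
  symm := ⟨fun u v ⟨h1, h2⟩ => ⟨h1.symm, by rwa [max_comm]⟩⟩
  loopless := ⟨fun v h => G.loopless.irrefl v h.1⟩

/-- For a finite connected graph `G` on `n` vertices and `i ≥ 1`, with `G_i'` the
spanning subgraph whose edges are the edges `{u,v}` of `G` with
`max (deg u) (deg v) ≥ i`, one has `n − c(G_i') + 1 ≥ |{v : deg v ≥ i}|`,
where `c` counts connected components (including isolated vertices). -/
theorem rank_level_ge_high_degree_count {V : Type*} [Fintype V] [DecidableEq V]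
    (G : SimpleGraph V) [DecidableRel G.Adj] (hG : G.Connected)
    (n : ℕ) (hn : n = Fintype.card V) (i : ℕ) (hi : 1 ≤ i) :
    (Finset.univ.filter fun v => i ≤ G.degree v).card ≤
      n - Nat.card (degreeLevelSubgraph' G i).ConnectedComponent + 1 := by
  classical
  set H := degreeLevelSubgraph' G i with hH
  have hne : Nonempty V := hG.nonempty
  by_cases hcase : ∃ C : H.ConnectedComponent,
      ∀ v, H.connectedComponentMk v = C → i ≤ G.degree v
  · -- one component contains only high-degree vertices; it must be everything
    obtain ⟨C, hC⟩ := hcase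
    have key : ∀ u v, G.Walk u v → H.connectedComponentMk u = C →
        H.connectedComponentMk v = C := by
      intro u v w
      induction w with
      | nil => exact id
      | @cons a b c hab p ih =>
        intro ha
        apply ih
        have hadj : H.Adj a b := ⟨hab, le_max_of_le_left (hC a ha)⟩
        rw [← ha]
        exact (SimpleGraph.ConnectedComponent.sound hadj.reachable).symm
    have hall : ∀ v, H.connectedComponentMk v = C := by
      obtain ⟨u, hu⟩ := C.exists_rep
      intro v
      obtain ⟨w⟩ := hG.preconnected u v
      exact key u v w hu
    have h1 : Nat.card H.ConnectedComponent = 1 := by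
      rw [Nat.card_eq_one_iff_unique]
      refine ⟨⟨fun a b => ?_⟩, ⟨C⟩⟩
      obtain ⟨x, hx⟩ := a.exists_rep
      obtain ⟨y, hy⟩ := b.exists_rep
      rw [← hx, ← hy]
      show H.connectedComponentMk x = H.connectedComponentMk y
      rw [hall x, hall y]
    have hn1 : 1 ≤ n := by
      rw [hn]
      exact Fintype.card_pos
    have hle : (Finset.univ.filter fun v => i ≤ G.degree v).card ≤ n := by
      rw [hn]
      simpa using Finset.card_filter_le Finset.univ _
    rw [h1]
    omega
  · push_neg at hcase
    choose g hg1 hg2 using hcase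
    have hcard : Nat.card H.ConnectedComponent ≤
        (Finset.univ.filter fun v => ¬ i ≤ G.degree v).card := by
      have hinj : Function.Injective
          (fun C : H.ConnectedComponent =>
            (⟨g C, by simp [hg2 C]⟩ :
              {x // x ∈ Finset.univ.filter fun v => ¬ i ≤ G.degree v})) := by
        intro a b hab
        have : g a = g b := by simpa using congrArg Subtype.val hab
        rw [← hg1 a, ← hg1 b, this]
      have := Nat.card_le_card_of_injective _ hinj
      rwa [Nat.card_eq_fintype_card, Nat.card_eq_fintype_card, Fintype.card_coe,
        ← Nat.card_eq_fintype_card] at this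
    have hsum : (Finset.univ.filter fun v => i ≤ G.degree v).card +
        (Finset.univ.filter fun v => ¬ i ≤ G.degree v).card = n := by
      rw [hn, ← Finset.card_univ]
      exact Finset.card_filter_add_card_filter_not _
    omega
end
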